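/- arXiv:1504.00640 — 7 statements merged into one kernel-verified Lean document; each statement's English description precedes it below -/
import Mathlib

section
/- For every bounded random variable ξ on an atomless probability space (Ω, F, P) and every α ∈ (0,1), the Entropic Value at Risk satisfies the dual representation e_α(ξ) = inf { E_Q[ξ] : Q a probability measure absolutely continuous with respect to P with relative entropy H(Q|P) ≤ -log α }. -/
open MeasureTheory Filter

/-- The integrand `(dQ/dP) log (dQ/dP)` of the relative entropy `H(Q|P)`. -/
noncomputable def entIntegrand {Ω : Type*} [MeasurableSpace Ω] (Q P : Measure Ω) (ω : Ω) : ℝ :=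
  (Q.rnDeriv P ω).toReal * Real.log (Q.rnDeriv P ω).toReal

/-- `H(Q|P) ≤ β`, where the relative entropy `H(Q|P) = E_P[(dQ/dP) log (dQ/dP)]` is
understood to be `+∞` (hence `> β`) when the integrand is not integrable. -/
def EntropyLE {Ω : Type*} [MeasurableSpace Ω] (Q P : Measure Ω) (β : ℝ) : Prop :=
  Integrable (entIntegrand Q P) P ∧ ∫ ω, entIntegrand Q P ω ∂P ≤ β


/-- Young-type inequality: `a*b ≤ b log b - b + exp a` for `b ≥ 0`. -/
lemma young_aux (a b : ℝ) (hb : 0 ≤ b) : a * b ≤ b * Real.log b - b + Real.exp a := by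
  rcases eq_or_lt_of_le hb with h | h
  · simp [← h, Real.exp_pos a |>.le]
  · have h1 : (a - Real.log b) + 1 ≤ Real.exp (a - Real.log b) := Real.add_one_le_exp _
    have h2 : b * ((a - Real.log b) + 1) ≤ b * Real.exp (a - Real.log b) :=
      mul_le_mul_of_nonneg_left h1 hb
    have h3 : Real.exp (a - Real.log b) = Real.exp a / b := by
      rw [Real.exp_sub, Real.exp_log h]
    rw [h3, mul_div_cancel₀ _ (ne_of_gt h)] at h2
    nlinarith
lemma xlogx_ge (x : ℝ) (hx : 0 ≤ x) : x - 1 ≤ x * Real.log x := by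
  rcases eq_or_lt_of_le hx with h | h
  · simp [← h]
  · have h1 : Real.log x⁻¹ ≤ x⁻¹ - 1 := Real.log_le_sub_one_of_pos (by positivity)
    rw [Real.log_inv] at h1
    have h2 : x * (-Real.log x) ≤ x * (x⁻¹ - 1) := mul_le_mul_of_nonneg_left h1 hx
    have h3 : x * (x⁻¹ - 1) = 1 - x := by field_simp
    nlinarith

/-- bounded measurable implies integrable on a probability space -/
lemma int_of_bdd {Ω : Type*} [MeasurableSpace Ω] (P : Measure Ω) [IsProbabilityMeasure P]
    {f : Ω → ℝ} (hf : Measurable f) {C : ℝ} (hC : ∀ᵐ ω ∂P, |f ω| ≤ C) :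
    Integrable f P :=
  Integrable.mono' (integrable_const C) hf.aestronglyMeasurable
    (by simpa [Real.norm_eq_abs] using hC)

section MGF
variable {Ω : Type*} [MeasurableSpace Ω] (P : Measure Ω) [IsProbabilityMeasure P]
  {ξ : Ω → ℝ} {C : ℝ}

omit [IsProbabilityMeasure P] in
lemma exp_bdd (hC : ∀ᵐ ω ∂P, |ξ ω| ≤ C) (z : ℝ) :
    ∀ᵐ ω ∂P, |Real.exp (-z * ξ ω)| ≤ Real.exp (|z| * C) := by
  filter_upwards [hC] with ω hω
  rw [abs_of_pos (Real.exp_pos _)]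
  apply Real.exp_le_exp.2
  calc -z * ξ ω ≤ |(-z) * ξ ω| := le_abs_self _
    _ = |z| * |ξ ω| := by rw [abs_mul, abs_neg]
    _ ≤ |z| * C := mul_le_mul_of_nonneg_left hω (abs_nonneg z)

lemma int_exp (hmeas : Measurable ξ) (hC : ∀ᵐ ω ∂P, |ξ ω| ≤ C) (z : ℝ) :
    Integrable (fun ω => Real.exp (-z * ξ ω)) P :=
  int_of_bdd P (Real.measurable_exp.comp (measurable_const.mul hmeas)) (exp_bdd P hC z)

lemma int_xexp (hmeas : Measurable ξ) (hC : ∀ᵐ ω ∂P, |ξ ω| ≤ C) (z : ℝ) :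
    Integrable (fun ω => ξ ω * Real.exp (-z * ξ ω)) P := by
  apply int_of_bdd P (hmeas.mul (Real.measurable_exp.comp (measurable_const.mul hmeas)))
    (C := C * Real.exp (|z| * C))
  filter_upwards [hC, exp_bdd P hC z] with ω h1 h2
  rw [Pi.mul_apply, abs_mul]
  have h0 : (0:ℝ) ≤ C := le_trans (abs_nonneg _) h1
  exact mul_le_mul h1 h2 (abs_nonneg _) h0

lemma Z_pos (hmeas : Measurable ξ) (hC : ∀ᵐ ω ∂P, |ξ ω| ≤ C) (z : ℝ) :
    Real.exp (-(|z| * C)) ≤ ∫ ω, Real.exp (-z * ξ ω) ∂P := by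
  have h : ∫ ω, Real.exp (-(|z| * C)) ∂P ≤ ∫ ω, Real.exp (-z * ξ ω) ∂P := by
    apply integral_mono_ae (integrable_const _) (int_exp P hmeas hC z)
    filter_upwards [hC] with ω hω
    apply Real.exp_le_exp.2
    have : -z * ξ ω ≥ -|(-z) * ξ ω| := neg_abs_le _
    calc -(|z| * C) ≤ -(|z| * |ξ ω|) := by
          exact neg_le_neg (mul_le_mul_of_nonneg_left hω (abs_nonneg z))
      _ = -|(-z) * ξ ω| := by rw [abs_mul, abs_neg]
      _ ≤ -z * ξ ω := neg_abs_le _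
  simpa using h

lemma Z_le (hmeas : Measurable ξ) (hC : ∀ᵐ ω ∂P, |ξ ω| ≤ C) (z : ℝ) :
    ∫ ω, Real.exp (-z * ξ ω) ∂P ≤ Real.exp (|z| * C) := by
  have h : ∫ ω, Real.exp (-z * ξ ω) ∂P ≤ ∫ ω, Real.exp (|z| * C) ∂P := by
    apply integral_mono_ae (int_exp P hmeas hC z) (integrable_const _)
    filter_upwards [exp_bdd P hC z] with ω hω
    exact le_trans (le_abs_self _) hω
  simpa using h

end MGF

section Gibbs
variable {Ω : Type*} [MeasurableSpace Ω] (P : Measure Ω) [IsProbabilityMeasure P]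

lemma gibbs_ineq {ξ : Ω → ℝ} {C : ℝ} (hmeas : Measurable ξ) (hC : ∀ᵐ ω ∂P, |ξ ω| ≤ C)
    {α : ℝ} (hα0 : 0 < α) {z : ℝ} (hz : 0 < z)
    (Q : Measure Ω) (hQ : IsProbabilityMeasure Q) (hQP : Q ≪ P)
    (hent : Integrable (entIntegrand Q P) P)
    (hentle : ∫ ω, entIntegrand Q P ω ∂P ≤ -Real.log α) :
    -(1 / z) * Real.log ((∫ ω, Real.exp (-z * ξ ω) ∂P) / α) ≤ ∫ ω, ξ ω ∂Q := by
  set Z : ℝ := ∫ ω, Real.exp (-z * ξ ω) ∂P with hZdef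
  have hZ : 0 < Z := lt_of_lt_of_le (Real.exp_pos _) (Z_pos P hmeas hC z)
  set ρ : Ω → ℝ := fun ω => (Q.rnDeriv P ω).toReal with hρdef
  have hρmeas : Measurable ρ := (Measure.measurable_rnDeriv Q P).ennreal_toReal
  have hρnn : ∀ ω, 0 ≤ ρ ω := fun ω => ENNReal.toReal_nonneg
  have hρint : Integrable ρ P := Measure.integrable_toReal_rnDeriv
  have hρone : ∫ ω, ρ ω ∂P = 1 := by
    rw [hρdef, Measure.integral_toReal_rnDeriv hQP]; simp
  set f : Ω → ℝ := fun ω => -z * ξ ω - Real.log Z with hfdef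
  have hefeq : ∀ ω, Real.exp (f ω) = Real.exp (-z * ξ ω) / Z := by
    intro ω; rw [hfdef]; simp only []
    rw [Real.exp_sub, Real.exp_log hZ]
  have hefint : Integrable (fun ω => Real.exp (f ω)) P := by
    apply Integrable.congr ((int_exp P hmeas hC z).div_const Z)
    filter_upwards with ω using (hefeq ω).symm
  have hefone : ∫ ω, Real.exp (f ω) ∂P = 1 := by
    rw [integral_congr_ae (Filter.Eventually.of_forall hefeq), integral_div]
    exact div_self (ne_of_gt hZ)
  have hξQ : ∫ ω, ξ ω ∂Q = ∫ ω, ρ ω * ξ ω ∂P := by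
    rw [← integral_rnDeriv_smul hQP]; simp [hρdef, smul_eq_mul]
  have hξρ_int : Integrable (fun ω => ρ ω * ξ ω) P := by
    apply Integrable.mono' (hρint.const_mul C)
      (hρmeas.mul hmeas).aestronglyMeasurable
    filter_upwards [hC] with ω hω
    rw [Real.norm_eq_abs, Pi.mul_apply, abs_mul, abs_of_nonneg (hρnn ω), mul_comm]
    exact mul_le_mul_of_nonneg_right hω (hρnn ω)
  have hfbd : ∀ᵐ ω ∂P, |f ω| ≤ z * C + |Real.log Z| := by
    filter_upwards [hC] with ω hω
    calc |f ω| ≤ |(-z) * ξ ω| + |Real.log Z| := abs_sub _ _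
      _ ≤ z * C + |Real.log Z| := by
        rw [abs_mul, abs_neg, abs_of_pos hz]
        exact add_le_add_left (mul_le_mul_of_nonneg_left hω hz.le) _
  have hfρ_int : Integrable (fun ω => f ω * ρ ω) P := by
    apply Integrable.mono' (hρint.const_mul (z * C + |Real.log Z|))
      (((measurable_const.mul hmeas).sub measurable_const).mul hρmeas).aestronglyMeasurable
    filter_upwards [hfbd] with ω hω
    rw [Real.norm_eq_abs, Pi.mul_apply, abs_mul, abs_of_nonneg (hρnn ω)]
    exact mul_le_mul_of_nonneg_right hω (hρnn ω)
  have hpt : ∀ᵐ ω ∂P, f ω * ρ ω ≤ entIntegrand Q P ω - ρ ω + Real.exp (f ω) := by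
    filter_upwards with ω
    exact young_aux (f ω) (ρ ω) (hρnn ω)
  have hmono : ∫ ω, f ω * ρ ω ∂P ≤ ∫ ω, (entIntegrand Q P ω - ρ ω + Real.exp (f ω)) ∂P :=
    integral_mono_ae hfρ_int ((hent.sub hρint).add hefint) hpt
  rw [integral_add (f := fun ω => entIntegrand Q P ω - ρ ω) (hent.sub hρint) hefint,
    integral_sub hent hρint, hρone, hefone] at hmono
  have hfρ_eq : ∫ ω, f ω * ρ ω ∂P = -z * (∫ ω, ρ ω * ξ ω ∂P) - Real.log Z := by
    have : ∀ ω, f ω * ρ ω = -z * (ρ ω * ξ ω) - Real.log Z * ρ ω := by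
      intro ω; simp only [hfdef]; ring
    rw [integral_congr_ae (Filter.Eventually.of_forall this),
      integral_sub (hξρ_int.const_mul (-z)) (hρint.const_mul (Real.log Z)),
      integral_const_mul, integral_const_mul, hρone, mul_one]
  rw [hfρ_eq] at hmono
  -- hmono : -z * ∫ ρ ξ - log Z ≤ ∫ entInt - 1 + 1 ≤ -log α
  have key : -z * (∫ ω, ρ ω * ξ ω ∂P) - Real.log Z ≤ -Real.log α := by linarith
  rw [hξQ, Real.log_div (ne_of_gt hZ) (ne_of_gt hα0)]
  set T : ℝ := ∫ ω, ρ ω * ξ ω ∂P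
  have h1 : Real.log α - Real.log Z ≤ z * T := by linarith
  calc -(1/z) * (Real.log Z - Real.log α) = (Real.log α - Real.log Z) / z := by ring
    _ ≤ (z * T) / z := by gcongr
    _ = T := by field_simp

end Gibbs

section GibbsMeasure
variable {Ω : Type*} [MeasurableSpace Ω] (P : Measure Ω) [IsProbabilityMeasure P]

lemma gibbs_measure_props {ξ : Ω → ℝ} {C : ℝ} (hmeas : Measurable ξ)
    (hC : ∀ᵐ ω ∂P, |ξ ω| ≤ C) {z : ℝ} (hz : 0 < z) :
    ∃ Q : Measure Ω, IsProbabilityMeasure Q ∧ Q ≪ P ∧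
      Integrable (entIntegrand Q P) P ∧
      (∫ ω, entIntegrand Q P ω ∂P =
        (-z * ∫ ω, ξ ω * Real.exp (-z * ξ ω) ∂P) / (∫ ω, Real.exp (-z * ξ ω) ∂P)
          - Real.log (∫ ω, Real.exp (-z * ξ ω) ∂P)) ∧
      (∫ ω, ξ ω ∂Q
        = (∫ ω, ξ ω * Real.exp (-z * ξ ω) ∂P) / (∫ ω, Real.exp (-z * ξ ω) ∂P)) := by
  set Z : ℝ := ∫ ω, Real.exp (-z * ξ ω) ∂P with hZdef
  have hZ : 0 < Z := lt_of_lt_of_le (Real.exp_pos _) (Z_pos P hmeas hC z)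
  set dens : Ω → ℝ := fun ω => Real.exp (-z * ξ ω) / Z with hdensdef
  have hdnn : ∀ ω, 0 ≤ dens ω := fun ω => div_nonneg (Real.exp_pos _).le hZ.le
  have hdmeas : Measurable dens :=
    (Real.measurable_exp.comp (measurable_const.mul hmeas)).div_const Z
  have hdint : Integrable dens P := (int_exp P hmeas hC z).div_const Z
  have hdone : ∫ ω, dens ω ∂P = 1 := by
    rw [hdensdef]; simp only []
    rw [integral_div]; exact div_self (ne_of_gt hZ)
  set Q : Measure Ω := P.withDensity (fun ω => ENNReal.ofReal (dens ω)) with hQdef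
  have hQP : Q ≪ P := withDensity_absolutelyContinuous P _
  have hprob : IsProbabilityMeasure Q := by
    constructor
    rw [hQdef, withDensity_apply _ MeasurableSet.univ, setLIntegral_univ,
      ← ofReal_integral_eq_lintegral_ofReal hdint (Filter.Eventually.of_forall hdnn),
      hdone]
    simp
  haveI := hprob
  have hrn : Q.rnDeriv P =ᵐ[P] fun ω => ENNReal.ofReal (dens ω) :=
    Measure.rnDeriv_withDensity P hdmeas.ennreal_ofReal
  set g : Ω → ℝ := fun ω => dens ω * (-z * ξ ω - Real.log Z) with hgdef
  have hlog : ∀ ω, Real.log (dens ω) = -z * ξ ω - Real.log Z := by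
    intro ω
    rw [hdensdef]; simp only []
    rw [Real.log_div (Real.exp_ne_zero _) (ne_of_gt hZ), Real.log_exp]
  have hent_eq : entIntegrand Q P =ᵐ[P] g := by
    filter_upwards [hrn] with ω h
    unfold entIntegrand
    rw [h, ENNReal.toReal_ofReal (hdnn ω), hlog ω]
  have hgint : Integrable g P := by
    apply int_of_bdd P (hdmeas.mul ((measurable_const.mul hmeas).sub measurable_const))
      (C := (Real.exp (|z| * C) / Z) * (z * C + |Real.log Z|))
    filter_upwards [hC, exp_bdd P hC z] with ω h1 h2
    rw [Pi.mul_apply, abs_mul]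
    apply mul_le_mul
    · rw [abs_of_nonneg (hdnn ω), hdensdef]; simp only []
      exact div_le_div_of_nonneg_right (le_trans (le_abs_self _) h2) hZ.le
    · calc |(-z) * ξ ω - Real.log Z| ≤ |(-z) * ξ ω| + |Real.log Z| := abs_sub _ _
        _ ≤ z * C + |Real.log Z| := by
          rw [abs_mul, abs_neg, abs_of_pos hz]
          exact add_le_add_left (mul_le_mul_of_nonneg_left h1 hz.le) _
    · exact abs_nonneg _
    · positivity
  have hent_int : Integrable (entIntegrand Q P) P := hgint.congr hent_eq.symm
  have hgsplit : ∀ ω, g ω = (-z / Z) * (ξ ω * Real.exp (-z * ξ ω)) - Real.log Z * dens ω := by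
    intro ω; rw [hgdef, hdensdef]; simp only []; field_simp
  have hIint : Integrable (fun ω => ξ ω * Real.exp (-z * ξ ω)) P := int_xexp P hmeas hC z
  have hgval : ∫ ω, g ω ∂P =
      (-z * ∫ ω, ξ ω * Real.exp (-z * ξ ω) ∂P) / Z - Real.log Z := by
    rw [integral_congr_ae (Filter.Eventually.of_forall hgsplit),
      integral_sub (hIint.const_mul _) (hdint.const_mul _),
      integral_const_mul, integral_const_mul, hdone, mul_one]
    ring
  have hEQ : ∫ ω, ξ ω ∂Q = (∫ ω, ξ ω * Real.exp (-z * ξ ω) ∂P) / Z := by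
    rw [← integral_rnDeriv_smul hQP (f := ξ)]
    have h1 : (fun ω => (Q.rnDeriv P ω).toReal • ξ ω)
        =ᵐ[P] fun ω => (ξ ω * Real.exp (-z * ξ ω)) / Z := by
      filter_upwards [hrn] with ω h
      rw [smul_eq_mul, h, ENNReal.toReal_ofReal (hdnn ω), hdensdef]
      simp only []
      ring
    rw [integral_congr_ae h1, integral_div]
  exact ⟨Q, hprob, hQP, hent_int,
    by rw [integral_congr_ae hent_eq, hgval], hEQ⟩

end GibbsMeasure

section Cont
variable {Ω : Type*} [MeasurableSpace Ω] (P : Measure Ω) [IsProbabilityMeasure P]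

lemma cont_param {ξ : Ω → ℝ} {C : ℝ} (hmeas : Measurable ξ) (hC : ∀ᵐ ω ∂P, |ξ ω| ≤ C)
    {φ : Ω → ℝ} (hφ : Measurable φ) {D : ℝ} (hφbd : ∀ᵐ ω ∂P, |φ ω| ≤ D) :
    Continuous (fun z : ℝ => ∫ ω, φ ω * Real.exp (-z * ξ ω) ∂P) := by
  rw [continuous_iff_continuousAt]
  intro z₀
  have hCnn : 0 ≤ C := by
    by_contra h
    push_neg at h
    have : ∀ᵐ ω ∂P, False := by
      filter_upwards [hC] with ω hω
      exact absurd (le_trans (abs_nonneg _) hω) (not_le.2 h)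
    simp at this
    exact (IsProbabilityMeasure.ne_zero P) this
  have hlt : ∀ᶠ z in nhds z₀, |z| < |z₀| + 1 :=
    (continuous_abs.tendsto z₀).eventually_lt_const (lt_add_one _)
  apply continuousAt_of_dominated (bound := fun _ => D * Real.exp ((|z₀| + 1) * C))
  · exact Filter.Eventually.of_forall fun z =>
      (hφ.mul (Real.measurable_exp.comp (measurable_const.mul hmeas))).aestronglyMeasurable
  · filter_upwards [hlt] with z hz
    filter_upwards [hC, hφbd] with ω h1 h2
    rw [Real.norm_eq_abs, abs_mul, abs_of_pos (Real.exp_pos _)]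
    have hDnn : 0 ≤ D := le_trans (abs_nonneg _) h2
    apply mul_le_mul h2 _ (Real.exp_pos _).le hDnn
    apply Real.exp_le_exp.2
    calc -z * ξ ω ≤ |(-z) * ξ ω| := le_abs_self _
      _ = |z| * |ξ ω| := by rw [abs_mul, abs_neg]
      _ ≤ (|z₀| + 1) * C := mul_le_mul hz.le h1 (abs_nonneg _) (by positivity)
  · exact integrable_const _
  · filter_upwards with ω
    exact (continuous_const.mul
      (Real.continuous_exp.comp (continuous_neg.mul continuous_const))).continuousAt

end Cont

section EntNonneg
variable {Ω : Type*} [MeasurableSpace Ω] (P : Measure Ω) [IsProbabilityMeasure P]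

lemma entropy_nonneg (Q : Measure Ω) [IsProbabilityMeasure Q] (hQP : Q ≪ P)
    (hint : Integrable (entIntegrand Q P) P) :
    0 ≤ ∫ ω, entIntegrand Q P ω ∂P := by
  have hρint : Integrable (fun ω => (Q.rnDeriv P ω).toReal) P :=
    Measure.integrable_toReal_rnDeriv
  have hρone : ∫ ω, (Q.rnDeriv P ω).toReal ∂P = 1 := by
    rw [Measure.integral_toReal_rnDeriv hQP]; simp
  have h : ∫ ω, ((Q.rnDeriv P ω).toReal - 1) ∂P ≤ ∫ ω, entIntegrand Q P ω ∂P := by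
    apply integral_mono_ae (hρint.sub (integrable_const 1)) hint
    filter_upwards with ω
    exact xlogx_ge _ ENNReal.toReal_nonneg
  rw [integral_sub hρint (integrable_const 1), hρone] at h
  simpa using h

end EntNonneg

section AbsI
variable {Ω : Type*} [MeasurableSpace Ω] (P : Measure Ω) [IsProbabilityMeasure P]

lemma absI_le {ξ : Ω → ℝ} {C : ℝ} (hmeas : Measurable ξ) (hC : ∀ᵐ ω ∂P, |ξ ω| ≤ C) (z : ℝ) :
    |∫ ω, ξ ω * Real.exp (-z * ξ ω) ∂P| ≤ C * ∫ ω, Real.exp (-z * ξ ω) ∂P := by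
  calc |∫ ω, ξ ω * Real.exp (-z * ξ ω) ∂P| ≤ ∫ ω, |ξ ω * Real.exp (-z * ξ ω)| ∂P := by
        have h := norm_integral_le_integral_norm (μ := P) (fun ω => ξ ω * Real.exp (-z * ξ ω))
        simp only [Real.norm_eq_abs] at h
        exact h
    _ ≤ ∫ ω, C * Real.exp (-z * ξ ω) ∂P := by
        apply integral_mono_ae (int_xexp P hmeas hC z).abs ((int_exp P hmeas hC z).const_mul C)
        filter_upwards [hC] with ω hω
        rw [abs_mul, abs_of_pos (Real.exp_pos _)]
        exact mul_le_mul_of_nonneg_right hω (Real.exp_pos _).le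
    _ = C * ∫ ω, Real.exp (-z * ξ ω) ∂P := integral_const_mul _ _

end AbsI

/-- The dual representation of the Entropic Value at Risk: for every bounded random
variable `ξ` on an atomless probability space and every `α ∈ (0,1)`,
`e_α(ξ) = inf { E_Q[ξ] : Q ≪ P, H(Q|P) ≤ -log α }`. -/
theorem evar_dual_representation
    {Ω : Type*} [MeasurableSpace Ω] (P : Measure Ω) [IsProbabilityMeasure P] [NullSingletonClass P]
    (α : ℝ) (hα : α ∈ Set.Ioo (0 : ℝ) 1)
    (ξ : Ω → ℝ) (hmeas : Measurable ξ) (hbdd : ∃ C : ℝ, ∀ᵐ ω ∂P, |ξ ω| ≤ C) :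
    sSup {y : ℝ | ∃ z : ℝ, 0 < z ∧
        y = -(1 / z) * Real.log ((∫ ω, Real.exp (-z * ξ ω) ∂P) / α)}
      = sInf {y : ℝ | ∃ Q : Measure Ω, IsProbabilityMeasure Q ∧ Q ≪ P ∧
          EntropyLE Q P (-Real.log α) ∧ y = ∫ ω, ξ ω ∂Q} := by
  obtain ⟨C₀, hC₀⟩ := hbdd
  obtain ⟨hα0, hα1⟩ := hα
  set C : ℝ := |C₀| with hCdef
  have hC : ∀ᵐ ω ∂P, |ξ ω| ≤ C := by
    filter_upwards [hC₀] with ω h; exact le_trans h (le_abs_self _)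
  have hCnn : (0:ℝ) ≤ C := abs_nonneg _
  have hlogα : Real.log α < 0 := Real.log_neg hα0 hα1
  set β : ℝ := -Real.log α with hβdef
  have hβpos : 0 < β := by simp only [hβdef]; linarith
  set S : Set ℝ := {y : ℝ | ∃ z : ℝ, 0 < z ∧
      y = -(1 / z) * Real.log ((∫ ω, Real.exp (-z * ξ ω) ∂P) / α)} with hSdef
  set T : Set ℝ := {y : ℝ | ∃ Q : Measure Ω, IsProbabilityMeasure Q ∧ Q ≪ P ∧
      EntropyLE Q P (-Real.log α) ∧ y = ∫ ω, ξ ω ∂Q} with hTdef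
  have hZpos : ∀ z : ℝ, 0 < ∫ ω, Real.exp (-z * ξ ω) ∂P :=
    fun z => lt_of_lt_of_le (Real.exp_pos _) (Z_pos P hmeas hC z)
  have hlogZ_ge : ∀ z : ℝ, 0 < z → -(z * C) ≤ Real.log (∫ ω, Real.exp (-z * ξ ω) ∂P) := by
    intro z hz
    have h1 : Real.log (Real.exp (-(|z| * C))) ≤ Real.log (∫ ω, Real.exp (-z * ξ ω) ∂P) :=
      Real.log_le_log (Real.exp_pos _) (Z_pos P hmeas hC z)
    rwa [Real.log_exp, abs_of_pos hz] at h1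
  -- S is nonempty
  have hSne : S.Nonempty :=
    ⟨-(1 / 1) * Real.log ((∫ ω, Real.exp (-(1:ℝ) * ξ ω) ∂P) / α), 1, one_pos, rfl⟩
  -- S is bounded above by C
  have hgleC : ∀ z : ℝ, 0 < z →
      -(1 / z) * Real.log ((∫ ω, Real.exp (-z * ξ ω) ∂P) / α) ≤ C := by
    intro z hz
    rw [Real.log_div (ne_of_gt (hZpos z)) (ne_of_gt hα0)]
    have h1 := hlogZ_ge z hz
    have h2 : -(1 / z) * (Real.log (∫ ω, Real.exp (-z * ξ ω) ∂P) - Real.log α)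
        = (Real.log α - Real.log (∫ ω, Real.exp (-z * ξ ω) ∂P)) / z := by ring
    rw [h2, div_le_iff₀ hz]
    nlinarith
  have hSbdd : BddAbove S := by
    refine ⟨C, fun y hy => ?_⟩
    obtain ⟨z, hz, rfl⟩ := hy
    exact hgleC z hz
  -- T is nonempty: take Q = P
  have hPent : entIntegrand P P =ᵐ[P] fun _ => (0:ℝ) := by
    filter_upwards [Measure.rnDeriv_self P] with ω h
    unfold entIntegrand
    rw [h]; simp
  have hPT : (∫ ω, ξ ω ∂P) ∈ T := by
    refine ⟨P, inferInstance, Measure.AbsolutelyContinuous.rfl, ⟨?_, ?_⟩, rfl⟩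
    · exact (integrable_const (0:ℝ)).congr hPent.symm
    · rw [integral_congr_ae hPent, integral_const]; simp; linarith
  have hTne : T.Nonempty := ⟨_, hPT⟩
  -- T is bounded below by -C
  have hTbdd : BddBelow T := by
    refine ⟨-C, fun y hy => ?_⟩
    obtain ⟨Q, hQ, hQP, _, rfl⟩ := hy
    haveI := hQ
    have hCQ : ∀ᵐ ω ∂Q, |ξ ω| ≤ C := hQP.ae_le hC
    have hint : Integrable ξ Q := int_of_bdd Q hmeas hCQ
    have h1 : ∫ ω, (-C : ℝ) ∂Q ≤ ∫ ω, ξ ω ∂Q := by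
      apply integral_mono_ae (integrable_const _) hint
      filter_upwards [hCQ] with ω hω
      exact neg_le_of_abs_le hω
    simpa using h1
  refine le_antisymm ?_ ?_
  · -- sSup S ≤ sInf T
    apply csSup_le hSne
    rintro y ⟨z, hz, rfl⟩
    apply le_csInf hTne
    rintro t ⟨Q, hQ, hQP, ⟨hent, hentle⟩, rfl⟩
    exact gibbs_ineq P hmeas hC hα0 hz Q hQ hQP hent hentle
  · -- sInf T ≤ sSup S
    -- the entropy of the Gibbs measure at parameter z
    set Hf : ℝ → ℝ := fun z =>
      (-z * ∫ ω, ξ ω * Real.exp (-z * ξ ω) ∂P) / (∫ ω, Real.exp (-z * ξ ω) ∂P)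
        - Real.log (∫ ω, Real.exp (-z * ξ ω) ∂P) with hHfdef
    have hHub : ∀ z : ℝ, 0 < z → Hf z ≤ 2 * z * C := by
      intro z hz
      have h1 := absI_le P hmeas hC z
      have hZp := hZpos z
      have h2 : (-z * ∫ ω, ξ ω * Real.exp (-z * ξ ω) ∂P)
          ≤ z * C * (∫ ω, Real.exp (-z * ξ ω) ∂P) := by nlinarith [neg_abs_le (∫ ω, ξ ω * Real.exp (-z * ξ ω) ∂P), le_abs_self (∫ ω, ξ ω * Real.exp (-z * ξ ω) ∂P)]
      have h3 : (-z * ∫ ω, ξ ω * Real.exp (-z * ξ ω) ∂P) / (∫ ω, Real.exp (-z * ξ ω) ∂P)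
          ≤ z * C := by rw [div_le_iff₀ hZp]; exact h2
      have h4 := hlogZ_ge z hz
      simp only [hHfdef]
      linarith
    by_cases hcase : ∀ z : ℝ, 0 < z → Hf z ≤ β
    · -- Case A: every Gibbs measure is feasible; approximate
      apply le_of_forall_pos_le_add
      intro ε hε
      set z : ℝ := β / ε with hzdef
      have hz : 0 < z := div_pos hβpos hε
      obtain ⟨Q, hQ, hQP, hent, hentval, hEQ⟩ := gibbs_measure_props P hmeas hC hz
      haveI := hQ
      have hfeas : ∫ ω, entIntegrand Q P ω ∂P ≤ -Real.log α := by
        rw [hentval]; exact hcase z hz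
      have hmem : (∫ ω, ξ ω ∂Q) ∈ T := ⟨Q, hQ, hQP, ⟨hent, hfeas⟩, rfl⟩
      have hnn : 0 ≤ ∫ ω, entIntegrand Q P ω ∂P := entropy_nonneg P Q hQP hent
      have hZp := hZpos z
      -- from nonnegativity of entropy : E ≤ -log Z / z
      have hEle : ∫ ω, ξ ω ∂Q ≤ -Real.log (∫ ω, Real.exp (-z * ξ ω) ∂P) / z := by
        rw [hEQ]
        rw [hentval] at hnn
        rw [le_div_iff₀ hz, ← sub_nonneg]
        have hexp : (-z * ∫ ω, ξ ω * Real.exp (-z * ξ ω) ∂P) / (∫ ω, Real.exp (-z * ξ ω) ∂P)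
            = -(z * ((∫ ω, ξ ω * Real.exp (-z * ξ ω) ∂P) / (∫ ω, Real.exp (-z * ξ ω) ∂P))) := by
          field_simp
        rw [hexp] at hnn
        linarith
      have hgmem : (-(1 / z) * Real.log ((∫ ω, Real.exp (-z * ξ ω) ∂P) / α)) ∈ S :=
        ⟨z, hz, rfl⟩
      have hgval : -(1 / z) * Real.log ((∫ ω, Real.exp (-z * ξ ω) ∂P) / α) + ε
          = -Real.log (∫ ω, Real.exp (-z * ξ ω) ∂P) / z := by
        rw [Real.log_div (ne_of_gt hZp) (ne_of_gt hα0)]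
        have hβε : ε = -Real.log α / z := by
          rw [eq_comm, div_eq_iff (ne_of_gt hz), hzdef, hβdef]
          field_simp
        rw [hβε]; ring
      calc sInf T ≤ ∫ ω, ξ ω ∂Q := csInf_le hTbdd hmem
        _ ≤ -Real.log (∫ ω, Real.exp (-z * ξ ω) ∂P) / z := hEle
        _ = -(1 / z) * Real.log ((∫ ω, Real.exp (-z * ξ ω) ∂P) / α) + ε := hgval.symm
        _ ≤ sSup S + ε := by
          have := le_csSup hSbdd hgmem
          linarith
    · -- Case B: intermediate value theorem gives an exactly feasible Gibbs measure
      push_neg at hcase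
      obtain ⟨z₀, hz₀pos, hz₀⟩ := hcase
      -- continuity of Hf
      have hZcont : Continuous (fun z : ℝ => ∫ ω, Real.exp (-z * ξ ω) ∂P) := by
        have := cont_param P hmeas hC (φ := fun _ => (1:ℝ)) measurable_const
          (D := 1) (by filter_upwards with ω; simp)
        simpa using this
      have hIcont : Continuous (fun z : ℝ => ∫ ω, ξ ω * Real.exp (-z * ξ ω) ∂P) :=
        cont_param P hmeas hC hmeas hC
      have hHcont : Continuous Hf := by
        apply Continuous.sub
        · exact (continuous_neg.mul hIcont).div hZcont fun z => ne_of_gt (hZpos z)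
        · exact hZcont.log fun z => ne_of_gt (hZpos z)
      set z₁ : ℝ := min z₀ (β / (2 * C + 1)) with hz₁def
      have hz₁pos : 0 < z₁ := lt_min hz₀pos (div_pos hβpos (by linarith))
      have hz₁le : z₁ ≤ z₀ := min_le_left _ _
      have hHz₁ : Hf z₁ ≤ β := by
        have h1 : Hf z₁ ≤ 2 * z₁ * C := hHub z₁ hz₁pos
        have h2 : z₁ ≤ β / (2 * C + 1) := min_le_right _ _
        have h3 : 2 * z₁ * C ≤ 2 * (β / (2 * C + 1)) * C := by nlinarith
        have h4 : 2 * (β / (2 * C + 1)) * C ≤ β := by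
          have hpos : (0:ℝ) < 2 * C + 1 := by linarith
          have heq : 2 * (β / (2 * C + 1)) * C = (2 * β * C) / (2 * C + 1) := by ring
          rw [heq, div_le_iff₀ hpos]
          nlinarith
        linarith
      have hmemIcc : β ∈ Set.Icc (Hf z₁) (Hf z₀) := ⟨hHz₁, hz₀.le⟩
      obtain ⟨zs, hzsmem, hzsval⟩ := intermediate_value_Icc hz₁le hHcont.continuousOn hmemIcc
      have hzs : 0 < zs := lt_of_lt_of_le hz₁pos hzsmem.1
      obtain ⟨Q, hQ, hQP, hent, hentval, hEQ⟩ := gibbs_measure_props P hmeas hC hzs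
      haveI := hQ
      have hfeas : ∫ ω, entIntegrand Q P ω ∂P ≤ -Real.log α := by
        rw [hentval]
        have : Hf zs = β := hzsval
        simp only [hHfdef] at this
        rw [this, hβdef]
      have hmem : (∫ ω, ξ ω ∂Q) ∈ T := ⟨Q, hQ, hQP, ⟨hent, hfeas⟩, rfl⟩
      -- E_Q(ξ) equals g(zs)
      have hZp := hZpos zs
      have hH:= hzsval
      simp only [hHfdef] at hH
      have hEg : ∫ ω, ξ ω ∂Q
          = -(1 / zs) * Real.log ((∫ ω, Real.exp (-zs * ξ ω) ∂P) / α) := by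
        rw [hEQ, Real.log_div (ne_of_gt hZp) (ne_of_gt hα0)]
        have hexp : (-zs * ∫ ω, ξ ω * Real.exp (-zs * ξ ω) ∂P) / (∫ ω, Real.exp (-zs * ξ ω) ∂P)
            = -(zs * ((∫ ω, ξ ω * Real.exp (-zs * ξ ω) ∂P) / (∫ ω, Real.exp (-zs * ξ ω) ∂P))) := by
          field_simp
        rw [hexp, hβdef] at hH
        have h5 : (∫ ω, ξ ω * Real.exp (-zs * ξ ω) ∂P) / (∫ ω, Real.exp (-zs * ξ ω) ∂P)
            = (Real.log α - Real.log (∫ ω, Real.exp (-zs * ξ ω) ∂P)) / zs := by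
          rw [eq_div_iff (ne_of_gt hzs)]
          linear_combination -hH
        rw [h5]; ring
      have hgmem : (-(1 / zs) * Real.log ((∫ ω, Real.exp (-zs * ξ ω) ∂P) / α)) ∈ S :=
        ⟨zs, hzs, rfl⟩
      calc sInf T ≤ ∫ ω, ξ ω ∂Q := csInf_le hTbdd hmem
        _ ≤ sSup S := by rw [hEg]; exact le_csSup hSbdd hgmem
end

section
/- Let A ∈ F with a = P(A) ∈ (0,1) and α ∈ (0,1). Then the infimum of Q(A) over all probability measures Q ≪ P with H(Q|P) ≤ -log α is attained by a measure whose density has the two-valued form dQ/dP = λ·1_A/a + (1-λ)·1_{A^c}/(1-a) for some λ ∈ [0,1], and consequently e_α(1_A) = min { λ ∈ [0,1] : F(λ,a) ≤ -log α }. -/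
open MeasureTheory

/-- `F(λ,a) = λ log λ + (1-λ) log(1-λ) - λ log a - (1-λ) log(1-a)`, the relative entropy
of the two-valued density `λ 1_A/a + (1-λ) 1_{Aᶜ}/(1-a)` (with `0 log 0 = 0`,
which is `Real.log 0 = 0` in Mathlib). -/
noncomputable def F (l a : ℝ) : ℝ :=
  l * Real.log l + (1 - l) * Real.log (1 - l) - l * Real.log a - (1 - l) * Real.log (1 - a)

lemma F_eq_aux (a l : ℝ) (ha0 : a ≠ 0) :
    a * ((l / a) * Real.log (l / a)) = l * Real.log l - l * Real.log a := by
  rcases eq_or_ne l 0 with rfl | hl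
  · simp
  · rw [Real.log_div hl ha0]; field_simp

/-- Jensen's inequality for the entropy integrand on a set of positive measure. -/
lemma jensen_set {Ω : Type*} [MeasurableSpace Ω] (P Q : Measure Ω) [IsProbabilityMeasure P]
    [IsProbabilityMeasure Q] (hQP : Q ≪ P) {s : Set Ω} (hs : MeasurableSet s) (hs0 : P s ≠ 0)
    (hint : Integrable (entIntegrand Q P) P) :
    (P s).toReal * (((Q s).toReal / (P s).toReal) * Real.log ((Q s).toReal / (P s).toReal))
      ≤ ∫ x in s, entIntegrand Q P x ∂P := by
  haveI : NeZero (P.restrict s) := ⟨by simpa [Measure.restrict_eq_zero] using hs0⟩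
  have hc : (0:ℝ) < (P s).toReal := ENNReal.toReal_pos hs0 (measure_ne_top P s)
  have h := Real.convexOn_mul_log.map_average_le (μ := P.restrict s)
    (f := fun ω => (Q.rnDeriv P ω).toReal)
    Real.continuous_mul_log.continuousOn isClosed_Ici
    (Filter.Eventually.of_forall fun ω => ENNReal.toReal_nonneg)
    (Measure.integrable_toReal_rnDeriv.restrict)
    (hint.restrict)
  rw [average_eq, average_eq, measureReal_restrict_apply_univ, measureReal_def] at h
  rw [Measure.setIntegral_toReal_rnDeriv hQP s] at h
  have h2 : ((P s).toReal)⁻¹ * ((Q s).toReal) * Real.log (((P s).toReal)⁻¹ * (Q s).toReal)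
      ≤ ((P s).toReal)⁻¹ * ∫ x in s, entIntegrand Q P x ∂P := by
    simpa [smul_eq_mul, measureReal_def, entIntegrand] using h
  calc (P s).toReal * (((Q s).toReal / (P s).toReal) * Real.log ((Q s).toReal / (P s).toReal))
      = (P s).toReal * (((P s).toReal)⁻¹ * ((Q s).toReal) *
          Real.log (((P s).toReal)⁻¹ * (Q s).toReal)) := by
        rw [div_eq_inv_mul]
    _ ≤ (P s).toReal * (((P s).toReal)⁻¹ * ∫ x in s, entIntegrand Q P x ∂P) :=
        mul_le_mul_of_nonneg_left h2 hc.le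
    _ = ∫ x in s, entIntegrand Q P x ∂P := by field_simp

/-- The basic properties of the two-valued-density measure. -/
lemma two_valued_props {Ω : Type*} [MeasurableSpace Ω] (P : Measure Ω) [IsProbabilityMeasure P]
    (A : Set Ω) (hA : MeasurableSet A) (ha : (P A).toReal ∈ Set.Ioo (0 : ℝ) 1)
    (lam : ℝ) (hlam : lam ∈ Set.Icc (0 : ℝ) 1) :
    IsProbabilityMeasure
        (P.withDensity (fun ω => ENNReal.ofReal
          (Set.indicator A (fun _ => lam / (P A).toReal) ω +
           Set.indicator Aᶜ (fun _ => (1 - lam) / (1 - (P A).toReal)) ω))) ∧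
    ((P.withDensity (fun ω => ENNReal.ofReal
          (Set.indicator A (fun _ => lam / (P A).toReal) ω +
           Set.indicator Aᶜ (fun _ => (1 - lam) / (1 - (P A).toReal)) ω))) A).toReal = lam ∧
    Integrable (entIntegrand (P.withDensity (fun ω => ENNReal.ofReal
          (Set.indicator A (fun _ => lam / (P A).toReal) ω +
           Set.indicator Aᶜ (fun _ => (1 - lam) / (1 - (P A).toReal)) ω))) P) P ∧
    ∫ ω, entIntegrand (P.withDensity (fun ω => ENNReal.ofReal
          (Set.indicator A (fun _ => lam / (P A).toReal) ω +
           Set.indicator Aᶜ (fun _ => (1 - lam) / (1 - (P A).toReal)) ω))) P ω ∂P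
      = F lam (P A).toReal := by
  set a := (P A).toReal with ha_def
  obtain ⟨ha0, ha1⟩ := ha
  obtain ⟨hlam0, hlam1⟩ := hlam
  set c1 := lam / a with hc1_def
  set c2 := (1 - lam) / (1 - a) with hc2_def
  have hc1 : 0 ≤ c1 := div_nonneg hlam0 ha0.le
  have hc2 : 0 ≤ c2 := div_nonneg (by linarith) (by linarith)
  set f := (fun ω => ENNReal.ofReal
      (Set.indicator A (fun _ => c1) ω + Set.indicator Aᶜ (fun _ => c2) ω)) with hf_def
  have hf_eq : f = fun ω => Set.indicator A (fun _ => ENNReal.ofReal c1) ω +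
      Set.indicator Aᶜ (fun _ => ENNReal.ofReal c2) ω := by
    funext ω; by_cases hω : ω ∈ A <;> simp [hf_def, hω]
  have hf_meas : Measurable f := by
    rw [hf_eq]
    exact (measurable_const.indicator hA).add (measurable_const.indicator hA.compl)
  have hPA : P A = ENNReal.ofReal a := (ENNReal.ofReal_toReal (measure_ne_top P A)).symm
  have hPAc : P Aᶜ = ENNReal.ofReal (1 - a) := by
    rw [prob_compl_eq_one_sub hA, hPA, ENNReal.ofReal_sub _ ha0.le, ENNReal.ofReal_one]
  have hc1a : c1 * a = lam := div_mul_cancel₀ lam ha0.ne'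
  have hc2a : c2 * (1 - a) = 1 - lam := div_mul_cancel₀ (1 - lam) (by linarith)
  have hQA : (P.withDensity f) A = ENNReal.ofReal lam := by
    have hcongr : ∫⁻ x in A, (A.indicator (fun _ => ENNReal.ofReal c1) x +
        Aᶜ.indicator (fun _ => ENNReal.ofReal c2) x) ∂P
        = ∫⁻ _x in A, ENNReal.ofReal c1 ∂P :=
      setLIntegral_congr_fun hA (fun x hx => by
        simp [Set.indicator_apply, hx])
    rw [withDensity_apply _ hA, hf_eq, hcongr, setLIntegral_const, hPA,
      ← ENNReal.ofReal_mul hc1, hc1a]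
  have hQAc : (P.withDensity f) Aᶜ = ENNReal.ofReal (1 - lam) := by
    have hcongr : ∫⁻ x in Aᶜ, (A.indicator (fun _ => ENNReal.ofReal c1) x +
        Aᶜ.indicator (fun _ => ENNReal.ofReal c2) x) ∂P
        = ∫⁻ _x in Aᶜ, ENNReal.ofReal c2 ∂P :=
      setLIntegral_congr_fun hA.compl (fun x hx => by
        simp [Set.indicator_apply, hx, show x ∉ A from hx])
    rw [withDensity_apply _ hA.compl, hf_eq, hcongr, setLIntegral_const, hPAc,
      ← ENNReal.ofReal_mul hc2, hc2a]
  have h1 : IsProbabilityMeasure (P.withDensity f) := by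
    constructor
    rw [← Set.union_compl_self A, measure_union (disjoint_compl_right) hA.compl, hQA, hQAc,
      ← ENNReal.ofReal_add hlam0 (by linarith)]
    norm_num
  have h2 : ((P.withDensity f) A).toReal = lam := by rw [hQA, ENNReal.toReal_ofReal hlam0]
  have hrn : (P.withDensity f).rnDeriv P =ᵐ[P] f := Measure.rnDeriv_withDensity P hf_meas
  set e := (fun ω => Set.indicator A (fun _ => c1 * Real.log c1) ω +
      Set.indicator Aᶜ (fun _ => c2 * Real.log c2) ω) with he_def
  have hent_eq : entIntegrand (P.withDensity f) P =ᵐ[P] e := by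
    filter_upwards [hrn] with ω hω
    rw [entIntegrand, hω, he_def]
    by_cases hωA : ω ∈ A
    · simp [hf_def, Set.indicator_apply, hωA, ENNReal.toReal_ofReal hc1]
    · simp [hf_def, Set.indicator_apply, hωA, ENNReal.toReal_ofReal hc2]
  have he_int : Integrable e P :=
    ((integrable_const _).indicator hA).add ((integrable_const _).indicator hA.compl)
  have hint : Integrable (entIntegrand (P.withDensity f) P) P := he_int.congr hent_eq.symm
  have hFval : ∫ ω, entIntegrand (P.withDensity f) P ω ∂P = F lam a := by
    rw [integral_congr_ae hent_eq, he_def]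
    rw [integral_add ((integrable_const _).indicator hA) ((integrable_const _).indicator hA.compl)]
    rw [integral_indicator_const _ hA, integral_indicator_const _ hA.compl]
    have e1 := F_eq_aux a lam ha0.ne'
    have e2 := F_eq_aux (1 - a) (1 - lam) (by linarith)
    rw [measureReal_def, measureReal_def]
    rw [← ha_def, hPAc, ENNReal.toReal_ofReal (by linarith)]
    rw [F]
    rw [← hc1_def] at e1
    rw [← hc2_def] at e2
    simp only [smul_eq_mul]
    linarith
  exact ⟨h1, h2, hint, hFval⟩

/-- For an indicator `1_A` with `a = P(A) ∈ (0,1)`, the infimum of `Q(A)` over all probability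
measures `Q ≪ P` with `H(Q|P) ≤ -log α` is attained by a measure whose density has the
two-valued form `λ 1_A/a + (1-λ) 1_{Aᶜ}/(1-a)`, and
`e_α(1_A) = min { λ ∈ [0,1] : F(λ,a) ≤ -log α }`. -/
theorem evar_indicator_attained_two_valued
    {Ω : Type*} [MeasurableSpace Ω] (P : Measure Ω) [IsProbabilityMeasure P] [NullSingletonClass P]
    (α : ℝ) (hα : α ∈ Set.Ioo (0 : ℝ) 1)
    (A : Set Ω) (hA : MeasurableSet A) (ha : (P A).toReal ∈ Set.Ioo (0 : ℝ) 1) :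
    ∃ lam ∈ Set.Icc (0 : ℝ) 1,
      F lam (P A).toReal ≤ -Real.log α ∧
      (IsProbabilityMeasure
          (P.withDensity (fun ω => ENNReal.ofReal
            (Set.indicator A (fun _ => lam / (P A).toReal) ω +
             Set.indicator Aᶜ (fun _ => (1 - lam) / (1 - (P A).toReal)) ω))) ∧
        (P.withDensity (fun ω => ENNReal.ofReal
            (Set.indicator A (fun _ => lam / (P A).toReal) ω +
             Set.indicator Aᶜ (fun _ => (1 - lam) / (1 - (P A).toReal)) ω)) ≪ P) ∧
        EntropyLE
          (P.withDensity (fun ω => ENNReal.ofReal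
            (Set.indicator A (fun _ => lam / (P A).toReal) ω +
             Set.indicator Aᶜ (fun _ => (1 - lam) / (1 - (P A).toReal)) ω))) P
          (-Real.log α) ∧
        ((P.withDensity (fun ω => ENNReal.ofReal
            (Set.indicator A (fun _ => lam / (P A).toReal) ω +
             Set.indicator Aᶜ (fun _ => (1 - lam) / (1 - (P A).toReal)) ω))) A).toReal
          = lam) ∧
      sInf {y : ℝ | ∃ Q : Measure Ω, IsProbabilityMeasure Q ∧ Q ≪ P ∧
          EntropyLE Q P (-Real.log α) ∧ y = (Q A).toReal} = lam ∧
      ∀ l ∈ Set.Icc (0 : ℝ) 1, F l (P A).toReal ≤ -Real.log α → lam ≤ l := by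
  obtain ⟨hα0, hα1⟩ := hα
  set a := (P A).toReal with ha_def
  have ha0 : 0 < a := ha.1
  have ha1 : a < 1 := ha.2
  set β := -Real.log α with hβ_def
  have hβ : 0 < β := by rw [hβ_def]; linarith [Real.log_neg hα0 hα1]
  set S : Set ℝ := {l | l ∈ Set.Icc (0:ℝ) 1 ∧ F l a ≤ β} with hS_def
  have haS : a ∈ S := by
    refine ⟨⟨ha0.le, ha1.le⟩, ?_⟩
    have : F a a = 0 := by rw [F]; ring
    rw [this]; exact hβ.le
  have hFcont : Continuous fun l => F l a := by
    have h1 : Continuous fun l : ℝ => (1 - l) * Real.log (1 - l) :=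
      Real.continuous_mul_log.comp (continuous_const.sub continuous_id)
    have h0 : Continuous fun l : ℝ => l * Real.log l := Real.continuous_mul_log
    show Continuous fun l => l * Real.log l + (1 - l) * Real.log (1 - l) -
      l * Real.log a - (1 - l) * Real.log (1 - a)
    exact ((h0.add h1).sub (continuous_id.mul continuous_const)).sub
      ((continuous_const.sub continuous_id).mul continuous_const)
  have hSclosed : IsClosed S :=
    IsClosed.inter isClosed_Icc (isClosed_le hFcont continuous_const)
  have hbdd : BddBelow S := ⟨0, fun x hx => hx.1.1⟩
  have hlamS : sInf S ∈ S := hSclosed.csInf_mem ⟨a, haS⟩ hbdd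
  set lam := sInf S with hlam_def
  have hmin : ∀ l ∈ Set.Icc (0:ℝ) 1, F l a ≤ β → lam ≤ l := fun l h1 h2 => csInf_le hbdd ⟨h1, h2⟩
  obtain ⟨hprob, hQAval, hint, hFval⟩ := two_valued_props P A hA ha lam hlamS.1
  have hent : EntropyLE (P.withDensity (fun ω => ENNReal.ofReal
      (Set.indicator A (fun _ => lam / a) ω +
       Set.indicator Aᶜ (fun _ => (1 - lam) / (1 - a)) ω))) P β :=
    ⟨hint, by rw [hFval]; exact hlamS.2⟩
  set T : Set ℝ := {y : ℝ | ∃ Q : Measure Ω, IsProbabilityMeasure Q ∧ Q ≪ P ∧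
      EntropyLE Q P β ∧ y = (Q A).toReal} with hT_def
  have hlamT : lam ∈ T :=
    ⟨_, hprob, withDensity_absolutelyContinuous P _, hent, hQAval.symm⟩
  have hTbdd : BddBelow T := by
    refine ⟨0, ?_⟩
    rintro y ⟨Q, _, _, _, rfl⟩
    exact ENNReal.toReal_nonneg
  have hlow : ∀ y ∈ T, lam ≤ y := by
    rintro y ⟨Q, hQprob, hQP, ⟨hQint, hQent⟩, rfl⟩
    haveI := hQprob
    set q := (Q A).toReal with hq_def
    have hq1 : q ≤ 1 := by
      have := ENNReal.toReal_mono ENNReal.one_ne_top (prob_le_one (μ := Q) (s := A))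
      simpa using this
    have hQAc : (Q Aᶜ).toReal = 1 - q := by
      rw [prob_compl_eq_one_sub hA, ENNReal.toReal_sub_of_le prob_le_one ENNReal.one_ne_top]
      simp
      rfl
    have hPA0 : P A ≠ 0 := by
      intro h
      have : a = 0 := by rw [ha_def, h]; simp
      linarith
    have hPAc_toReal : (P Aᶜ).toReal = 1 - a := by
      rw [prob_compl_eq_one_sub hA, ENNReal.toReal_sub_of_le prob_le_one ENNReal.one_ne_top]
      simp
      rfl
    have hPAc0 : P Aᶜ ≠ 0 := by
      intro h
      rw [h] at hPAc_toReal
      simp at hPAc_toReal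
      linarith
    have j1 := jensen_set P Q hQP hA hPA0 hQint
    have j2 := jensen_set P Q hQP hA.compl hPAc0 hQint
    rw [← ha_def, ← hq_def] at j1
    rw [hPAc_toReal, hQAc] at j2
    have hspl : (∫ x in A, entIntegrand Q P x ∂P) + ∫ x in Aᶜ, entIntegrand Q P x ∂P
        = ∫ x, entIntegrand Q P x ∂P := integral_add_compl hA hQint
    have e1 := F_eq_aux a q ha0.ne'
    have e2 := F_eq_aux (1 - a) (1 - q) (by linarith)
    have hFq : F q a ≤ β := by
      rw [F]
      linarith
    exact hmin q ⟨ENNReal.toReal_nonneg, hq1⟩ hFq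
  refine ⟨lam, hlamS.1, hlamS.2, ⟨hprob, withDensity_absolutelyContinuous P _, hent, hQAval⟩,
    le_antisymm (csInf_le hTbdd hlamT) (le_csInf ⟨lam, hlamT⟩ hlow), hmin⟩
end

section
/- Let α ∈ (0,1). For every a ∈ (1-α, 1), there is exactly one λ ∈ [0, a) with F(λ,a) = -log α; this defines an implicit function Λ(a) ∈ [0, a) on (1-α, 1). -/
/-- Fix `α ∈ (0,1)`. For every `a ∈ (1-α, 1)` there is exactly one `λ ∈ [0,a)` with
`F(λ,a) = -log α`; this defines the implicit function `Λ(a) ∈ [0,a)` on `(1-α,1)`. -/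
theorem implicit_lambda_exists_unique (α : ℝ) (hα : α ∈ Set.Ioo (0 : ℝ) 1)
    (a : ℝ) (ha : a ∈ Set.Ioo (1 - α) 1) :
    ∃! l : ℝ, l ∈ Set.Ico 0 a ∧ F l a = -Real.log α := by
  obtain ⟨hα0, hα1⟩ := hα
  obtain ⟨ha1, ha2⟩ := ha
  have ha0 : 0 < a := by linarith
  have h1a : 0 < 1 - a := by linarith
  have hcont : Continuous fun l : ℝ => F l a := by
    unfold F
    exact ((Real.continuous_mul_log.add
      (Real.continuous_mul_log.comp (continuous_const.sub continuous_id))).sub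
      (continuous_id.mul continuous_const)).sub
      ((continuous_const.sub continuous_id).mul continuous_const)
  have hanti : StrictAntiOn (fun l => F l a) (Set.Icc 0 a) := by
    apply strictAntiOn_of_deriv_neg (convex_Icc 0 a) hcont.continuousOn
    intro x hx
    rw [interior_Icc] at hx
    obtain ⟨hx0, hxa⟩ := hx
    have hd : HasDerivAt (fun l => F l a)
        ((Real.log x + 1) + (Real.log (1 - x) + 1) * (-1) - 1 * Real.log a
          - (-1 * Real.log (1 - a))) x := by
      unfold F
      exact (((Real.hasDerivAt_mul_log hx0.ne').add
        ((Real.hasDerivAt_mul_log (show (1:ℝ) - x ≠ 0 by linarith)).comp x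
          ((hasDerivAt_id x).const_sub 1))).sub
        ((hasDerivAt_id x).mul_const _)).sub
        (((hasDerivAt_id x).const_sub 1).mul_const _)
    rw [hd.deriv]
    have l1 : Real.log x < Real.log a := Real.log_lt_log hx0 hxa
    have l2 : Real.log (1 - a) < Real.log (1 - x) := Real.log_lt_log h1a (by linarith)
    linarith
  have hF0 : F 0 a = -Real.log (1 - a) := by simp [F]
  have hFa : F a a = 0 := by unfold F; ring
  have hlog : 0 < -Real.log α := by
    have := Real.log_neg hα0 hα1; linarith
  have hlog2 : -Real.log α < -Real.log (1 - a) := by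
    have : Real.log (1 - a) < Real.log α := Real.log_lt_log h1a (by linarith)
    linarith
  have hmem : -Real.log α ∈ Set.Icc (F a a) (F 0 a) := by
    rw [hFa, hF0]; exact ⟨hlog.le, hlog2.le⟩
  obtain ⟨l, hl, hFl⟩ := intermediate_value_Icc' ha0.le hcont.continuousOn hmem
  simp only at hFl
  have hlne : l ≠ a := by
    intro h; rw [h, hFa] at hFl; linarith
  refine ⟨l, ⟨⟨hl.1, lt_of_le_of_ne hl.2 hlne⟩, hFl⟩, ?_⟩
  rintro y ⟨⟨hy0, hya⟩, hFy⟩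
  exact hanti.injOn ⟨hy0, hya.le⟩ ⟨hl.1, hl.2⟩ (by simp only [hFy, hFl])
end

section
/- Let A ∈ F with 0 < P(A) < 1 and α ∈ (0,1). If P(A) ≤ 1-α, then e_α(1_A) = 0; if P(A) > 1-α, then e_α(1_A) = Λ(P(A)) > 0, where Λ(a) is the unique λ ∈ [0,a) with F(λ,a) = -log α. -/
open MeasureTheory

/-- The Entropic Value at Risk at level `α`:
`e_α(ξ) = sup_{z>0} ( -(1/z) log E_P[exp(-zξ)/α] )`. -/
noncomputable def evar {Ω : Type*} [MeasurableSpace Ω] (P : Measure Ω) (α : ℝ)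
    (ξ : Ω → ℝ) : ℝ :=
  sSup {y : ℝ | ∃ z : ℝ, 0 < z ∧
    y = -(1 / z) * Real.log ((∫ ω, Real.exp (-z * ξ ω) ∂P) / α)}

/-- The value of the Entropic Value at Risk on indicators: with `a = P(A) ∈ (0,1)`,
if `a ≤ 1-α` then `e_α(1_A) = 0`; if `a > 1-α` then `e_α(1_A) = Λ(a) > 0`, where `Λ(a)`
is the unique `λ ∈ [0,a)` with `F(λ,a) = -log α`. -/
theorem evar_indicator
    {Ω : Type*} [MeasurableSpace Ω] (P : Measure Ω) [IsProbabilityMeasure P] [NullSingletonClass P]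
    (α : ℝ) (hα : α ∈ Set.Ioo (0 : ℝ) 1)
    (A : Set Ω) (hA : MeasurableSet A) (ha : (P A).toReal ∈ Set.Ioo (0 : ℝ) 1) :
    ((P A).toReal ≤ 1 - α → evar P α (Set.indicator A fun _ => (1 : ℝ)) = 0) ∧
    (1 - α < (P A).toReal →
      ∀ l ∈ Set.Ico (0 : ℝ) (P A).toReal, F l (P A).toReal = -Real.log α →
        evar P α (Set.indicator A fun _ => (1 : ℝ)) = l ∧ 0 < l) := by
  obtain ⟨hα0, hα1⟩ := hα
  obtain ⟨ha0, ha1⟩ := ha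
  set a := (P A).toReal with ha_def
  have hint : ∀ z : ℝ, (∫ ω, Real.exp (-z * (Set.indicator A (fun _ => (1:ℝ)) ω)) ∂P)
      = a * Real.exp (-z) + (1 - a) := by
    intro z
    have hfun : (fun ω => Real.exp (-z * (Set.indicator A (fun _ => (1:ℝ)) ω)))
        = fun ω => Set.indicator A (fun _ => Real.exp (-z) - 1) ω + 1 := by
      funext ω
      by_cases hω : ω ∈ A
      · simp [Set.indicator_of_mem hω]
      · simp [Set.indicator_of_notMem hω]
    rw [hfun, integral_add ((integrable_const _).indicator hA) (integrable_const 1),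
      integral_indicator_const _ hA, integral_const]
    simp only [measure_univ, Measure.real, ENNReal.toReal_one, smul_eq_mul, one_mul, ← ha_def]
    ring
  have hset : {y : ℝ | ∃ z : ℝ, 0 < z ∧
        y = -(1 / z) * Real.log ((∫ ω, Real.exp (-z * (Set.indicator A (fun _ => (1:ℝ)) ω)) ∂P) / α)}
      = {y : ℝ | ∃ z : ℝ, 0 < z ∧
        y = -(1 / z) * Real.log ((a * Real.exp (-z) + (1 - a)) / α)} := by
    ext y
    simp only [Set.mem_setOf_eq, hint]
  have hevar : evar P α (Set.indicator A fun _ => (1 : ℝ))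
      = sSup {y : ℝ | ∃ z : ℝ, 0 < z ∧
        y = -(1 / z) * Real.log ((a * Real.exp (-z) + (1 - a)) / α)} := by
    rw [evar, hset]
  set S : Set ℝ := {y : ℝ | ∃ z : ℝ, 0 < z ∧
      y = -(1 / z) * Real.log ((a * Real.exp (-z) + (1 - a)) / α)} with hS_def
  have hQpos : ∀ z : ℝ, 0 < a * Real.exp (-z) + (1 - a) := by
    intro z
    nlinarith [Real.exp_pos (-z)]
  have hQle1 : ∀ z : ℝ, 0 < z → a * Real.exp (-z) + (1 - a) ≤ 1 := by
    intro z hz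
    nlinarith [Real.exp_lt_one_iff.mpr (by linarith : -z < 0)]
  constructor
  · -- case a ≤ 1 - α
    intro hle
    have hub : ∀ y ∈ S, y ≤ 0 := by
      rintro y ⟨z, hz, rfl⟩
      have h1 : α ≤ a * Real.exp (-z) + (1 - a) := by
        nlinarith [Real.exp_pos (-z)]
      have h2 : (1:ℝ) ≤ (a * Real.exp (-z) + (1 - a)) / α := (one_le_div hα0).mpr h1
      have h3 := Real.log_nonneg h2
      have h4 : 0 ≤ (1 / z) * Real.log ((a * Real.exp (-z) + (1 - a)) / α) :=
        mul_nonneg (by positivity) h3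
      linarith
    rw [hevar]
    refine le_antisymm (Real.sSup_le hub le_rfl) ?_
    by_contra hlt
    push_neg at hlt
    have hlogα : Real.log α < 0 := Real.log_neg hα0 hα1
    have hsne : sSup S ≠ 0 := ne_of_lt hlt
    set z : ℝ := (Real.log α - 1) / sSup S with hz_def
    have hz : 0 < z := div_pos_of_neg_of_neg (by linarith) hlt
    have hzS : sSup S * z = Real.log α - 1 := by
      rw [hz_def, mul_comm, div_mul_cancel₀ _ hsne]
    have hmem : -(1 / z) * Real.log ((a * Real.exp (-z) + (1 - a)) / α) ∈ S :=
      ⟨z, hz, rfl⟩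
    have hle' : -(1 / z) * Real.log ((a * Real.exp (-z) + (1 - a)) / α) ≤ sSup S :=
      le_csSup ⟨0, hub⟩ hmem
    have hlogQ : Real.log (a * Real.exp (-z) + (1 - a)) ≤ 0 :=
      Real.log_nonpos (le_of_lt (hQpos z)) (hQle1 z hz)
    have hdiv : Real.log ((a * Real.exp (-z) + (1 - a)) / α)
        = Real.log (a * Real.exp (-z) + (1 - a)) - Real.log α :=
      Real.log_div (ne_of_gt (hQpos z)) (ne_of_gt hα0)
    rw [hdiv, show -(1 / z) * (Real.log (a * Real.exp (-z) + (1 - a)) - Real.log α)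
        = (Real.log α - Real.log (a * Real.exp (-z) + (1 - a))) / z from by ring,
      div_le_iff₀ hz, hzS] at hle'
    linarith
  · -- case 1 - α < a
    intro hgt l hl hF
    obtain ⟨hl0, hla⟩ := hl
    have hl1 : l < 1 := lt_trans hla ha1
    have hlpos : 0 < l := by
      rcases eq_or_lt_of_le hl0 with h | h
      · exfalso
        have hF0 : F 0 a = -Real.log (1 - a) := by
          simp [F]
        rw [← h] at hF
        rw [hF0] at hF
        have : Real.log (1 - a) = Real.log α := by linarith
        have h1a : (0:ℝ) < 1 - a := by linarith
        have h2 : 1 - a = α := by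
          rw [← Real.exp_log h1a, ← Real.exp_log hα0, this]
        linarith
      · exact h
    have h1l : (0:ℝ) < 1 - l := by linarith
    have h1a : (0:ℝ) < 1 - a := by linarith
    have hlogα : Real.log α = -F l a := by linarith
    -- key inequality: ∀ z, α * exp (-(z*l)) ≤ a * exp (-z) + (1-a)
    have hkey : ∀ z : ℝ, α * Real.exp (-(z * l)) ≤ a * Real.exp (-z) + (1 - a) := by
      intro z
      have hp1 : (0:ℝ) < a * Real.exp (-z) / l := by positivity
      have hp2 : (0:ℝ) < (1 - a) / (1 - l) := by positivity
      have hgm := Real.geom_mean_le_arith_mean2_weighted hl0 (le_of_lt h1l)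
        (le_of_lt hp1) (le_of_lt hp2) (by ring)
      have hsum : l * (a * Real.exp (-z) / l) + (1 - l) * ((1 - a) / (1 - l))
          = a * Real.exp (-z) + (1 - a) := by
        field_simp
      rw [hsum] at hgm
      have hlhs : (a * Real.exp (-z) / l) ^ l * ((1 - a) / (1 - l)) ^ (1 - l)
          = α * Real.exp (-(z * l)) := by
        rw [Real.rpow_def_of_pos hp1, Real.rpow_def_of_pos hp2, ← Real.exp_add]
        have hα_eq : α = Real.exp (-F l a) := by
          rw [← Real.exp_log hα0, hlogα]
        rw [hα_eq, ← Real.exp_add]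
        congr 1
        have e1 : Real.log (a * Real.exp (-z) / l)
            = Real.log a + (-z) - Real.log l := by
          rw [Real.log_div (by positivity) (ne_of_gt hlpos),
            Real.log_mul (ne_of_gt ha0) (ne_of_gt (Real.exp_pos _)), Real.log_exp]
        have e2 : Real.log ((1 - a) / (1 - l)) = Real.log (1 - a) - Real.log (1 - l) :=
          Real.log_div (ne_of_gt h1a) (ne_of_gt h1l)
        rw [e1, e2, F]
        ring
      rw [hlhs] at hgm
      exact hgm
    have hub : ∀ y ∈ S, y ≤ l := by
      rintro y ⟨z, hz, rfl⟩
      have h1 : Real.exp (Real.log α + -(z * l)) ≤ a * Real.exp (-z) + (1 - a) := by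
        rw [Real.exp_add, Real.exp_log hα0]
        exact hkey z
      have h2 : Real.log α + -(z * l) ≤ Real.log (a * Real.exp (-z) + (1 - a)) := by
        rw [← Real.log_exp (Real.log α + -(z * l))]
        exact Real.log_le_log (Real.exp_pos _) h1
      have hdiv : Real.log ((a * Real.exp (-z) + (1 - a)) / α)
          = Real.log (a * Real.exp (-z) + (1 - a)) - Real.log α :=
        Real.log_div (ne_of_gt (hQpos z)) (ne_of_gt hα0)
      rw [hdiv, show -(1 / z) * (Real.log (a * Real.exp (-z) + (1 - a)) - Real.log α)
          = -(Real.log (a * Real.exp (-z) + (1 - a)) - Real.log α) / z from by ring,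
        div_le_iff₀ hz]
      linarith
    -- the maximizing point
    set zs : ℝ := Real.log (a * (1 - l) / (l * (1 - a))) with hzs_def
    have hfrac : (1:ℝ) < a * (1 - l) / (l * (1 - a)) := by
      rw [lt_div_iff₀ (by positivity)]
      nlinarith
    have hzs : 0 < zs := Real.log_pos hfrac
    have hexp : Real.exp (-zs) = l * (1 - a) / (a * (1 - l)) := by
      rw [Real.exp_neg, Real.exp_log (by positivity : (0:ℝ) < a * (1 - l) / (l * (1 - a)))]
      rw [inv_div]
    have hQ : a * Real.exp (-zs) + (1 - a) = (1 - a) / (1 - l) := by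
      rw [hexp]
      field_simp
      ring
    have hzs_expand : zs = Real.log a + Real.log (1 - l) - Real.log l - Real.log (1 - a) := by
      rw [hzs_def, Real.log_div (by positivity) (by positivity),
        Real.log_mul (ne_of_gt ha0) (ne_of_gt h1l),
        Real.log_mul (ne_of_gt hlpos) (ne_of_gt h1a)]
      ring
    have hmem : l ∈ S := by
      refine ⟨zs, hzs, ?_⟩
      rw [hQ]
      have hlog : Real.log ((1 - a) / (1 - l) / α)
          = Real.log (1 - a) - Real.log (1 - l) - Real.log α := by
        rw [Real.log_div (by positivity) (ne_of_gt hα0),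
          Real.log_div (ne_of_gt h1a) (ne_of_gt h1l)]
      rw [hlog, hlogα, F]
      have : Real.log (1 - a) - Real.log (1 - l) -
          -(l * Real.log l + (1 - l) * Real.log (1 - l) - l * Real.log a
            - (1 - l) * Real.log (1 - a)) = -l * zs := by
        rw [hzs_expand]
        ring
      rw [this]
      field_simp
    refine ⟨?_, hlpos⟩
    rw [hevar]
    exact le_antisymm (Real.sSup_le hub (le_of_lt hlpos)) (le_csSup ⟨l, hub⟩ hmem)
end

section
/- The implicit function Λ is differentiable on (1-α, 1) with Λ'(a) > 0 for all a ∈ (1-α, 1); in particular Λ is strictly increasing on (1-α, 1). -/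
open Real Filter Set Topology

lemma hasStrictDerivAt_xlogx {x : ℝ} (hx : x ≠ 0) :
    HasStrictDerivAt (fun x : ℝ => x * Real.log x) (Real.log x + 1) x := by
  have := (hasStrictDerivAt_id x).mul (Real.hasStrictDerivAt_log hx)
  exact this.congr_deriv (by simp [hx])

/-- derivative of `F` in the first variable. -/
lemma hasStrictDerivAt_F_left (a : ℝ) {l : ℝ} (hl0 : 0 < l) (hl1 : l < 1) :
    HasStrictDerivAt (fun l => F l a)
      (Real.log l - Real.log (1 - l) - Real.log a + Real.log (1 - a)) l := by
  have h1 : HasStrictDerivAt (fun l : ℝ => l * Real.log l) (Real.log l + 1) l :=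
    hasStrictDerivAt_xlogx hl0.ne'
  have hin : HasStrictDerivAt (fun l : ℝ => 1 - l) (-1) l := by
    simpa [Pi.sub_def] using (hasStrictDerivAt_const l (1:ℝ)).sub (hasStrictDerivAt_id l)
  have h2 : HasStrictDerivAt (fun l : ℝ => (1 - l) * Real.log (1 - l))
      ((Real.log (1 - l) + 1) * (-1)) l := by
    have := (hasStrictDerivAt_xlogx (x := 1 - l) (by linarith)).comp l hin
    simpa [Function.comp_def] using this
  have h3 : HasStrictDerivAt (fun l : ℝ => l * Real.log a) (Real.log a) l := by
    simpa using (hasStrictDerivAt_id l).mul_const (Real.log a)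
  have h4 : HasStrictDerivAt (fun l : ℝ => (1 - l) * Real.log (1 - a)) (-Real.log (1 - a)) l := by
    simpa using hin.mul_const (Real.log (1 - a))
  have := ((h1.add h2).sub h3).sub h4
  exact this.congr_deriv (by ring)

lemma continuous_F_left (a : ℝ) : Continuous (fun l => F l a) := by
  unfold F
  have h1 : Continuous fun l : ℝ => (1 - l) * Real.log (1 - l) :=
    Real.continuous_mul_log.comp (continuous_const.sub continuous_id)
  exact ((Real.continuous_mul_log.add h1).sub
    (continuous_id.mul continuous_const)).sub
    ((continuous_const.sub continuous_id).mul continuous_const)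

/-- `F` is strictly decreasing in `l` on `[0,a]`. -/
lemma F_strictAntiOn {a : ℝ} (ha0 : 0 < a) (ha1 : a < 1) :
    StrictAntiOn (fun l => F l a) (Set.Icc 0 a) := by
  apply strictAntiOn_of_deriv_neg (convex_Icc _ _) (continuous_F_left a).continuousOn
  intro l hl
  rw [interior_Icc] at hl
  rw [(hasStrictDerivAt_F_left a hl.1 (hl.2.trans ha1)).hasDerivAt.deriv]
  have hll : l * (1 - a) < a * (1 - l) := by nlinarith [hl.1, hl.2]
  have := Real.log_lt_log (by nlinarith [hl.1, hl.2]) hll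
  rw [Real.log_mul hl.1.ne' (by linarith), Real.log_mul ha0.ne' (by linarith : (1:ℝ) - l ≠ 0)] at this
  linarith
lemma continuousAt_F_right (l : ℝ) {a : ℝ} (ha0 : a ≠ 0) (ha1 : a ≠ 1) :
    ContinuousAt (fun a => F l a) a := by
  unfold F
  have hlog1 : ContinuousAt (fun a : ℝ => Real.log a) a := Real.continuousAt_log ha0
  have hlog2 : ContinuousAt (fun a : ℝ => Real.log (1 - a)) a :=
    (Real.continuousAt_log (by simpa [sub_eq_zero] using fun h => ha1 h.symm)).comp
      (continuousAt_const.sub continuousAt_id)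
  exact ((continuousAt_const.sub (continuousAt_const.mul hlog1)).sub
    (continuousAt_const.mul hlog2))

lemma lambda_continuousAt (α : ℝ) (hα : α ∈ Set.Ioo (0 : ℝ) 1)
    (Λ : ℝ → ℝ)
    (hΛ : ∀ a ∈ Set.Ioo (1 - α) 1, Λ a ∈ Set.Ico 0 a ∧ F (Λ a) a = -Real.log α)
    {a₀ : ℝ} (ha₀ : a₀ ∈ Set.Ioo (1 - α) 1) (hl0 : 0 < Λ a₀) :
    Filter.Tendsto Λ (𝓝 a₀) (𝓝 (Λ a₀)) := by
  obtain ⟨hαl, hαr⟩ := hα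
  obtain ⟨ha₀l, ha₀r⟩ := ha₀
  have ha₀0 : 0 < a₀ := by linarith
  set c : ℝ := -Real.log α with hc
  set l₀ := Λ a₀ with hl₀
  have hΛ₀ := hΛ a₀ ⟨ha₀l, ha₀r⟩
  have hl0a : l₀ < a₀ := hΛ₀.1.2
  have hFc : F l₀ a₀ = c := hΛ₀.2
  rw [Metric.tendsto_nhds]
  intro ε hε
  set δ := min (ε/2) (min (l₀/2) ((a₀ - l₀)/2)) with hδdef
  have hδ : 0 < δ := by
    apply lt_min (by linarith) (lt_min (by linarith) (by linarith))
  have hδl : δ ≤ l₀/2 := (min_le_right _ _).trans (min_le_left _ _)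
  have hδa : δ ≤ (a₀ - l₀)/2 := (min_le_right _ _).trans (min_le_right _ _)
  have hδε : δ ≤ ε/2 := min_le_left _ _
  set lm := l₀ - δ with hlm
  set lp := l₀ + δ with hlp
  have hlm0 : 0 < lm := by simp only [hlm]; linarith
  have hlpa : lp < a₀ := by simp only [hlp]; linarith
  have hanti := F_strictAntiOn ha₀0 ha₀r
  have hFm : c < F lm a₀ := by
    have := hanti ⟨hlm0.le, by linarith⟩ ⟨(by linarith : (0:ℝ) ≤ l₀), hl0a.le⟩ (by simp only [hlm]; linarith)
    simpa only [hFc] using this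
  have hFp : F lp a₀ < c := by
    have := hanti ⟨(by linarith : (0:ℝ) ≤ l₀), hl0a.le⟩ ⟨by linarith, hlpa.le⟩ (by simp only [hlp]; linarith)
    simpa only [hFc] using this
  have ev1 : ∀ᶠ a in 𝓝 a₀, c < F lm a :=
    ((continuousAt_F_right lm ha₀0.ne' (ne_of_lt ha₀r)).tendsto).eventually_const_lt hFm
  have ev2 : ∀ᶠ a in 𝓝 a₀, F lp a < c :=
    ((continuousAt_F_right lp ha₀0.ne' (ne_of_lt ha₀r)).tendsto).eventually_lt_const hFp
  have ev3 : ∀ᶠ a in 𝓝 a₀, lp < a := eventually_gt_nhds hlpa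
  have ev4 : ∀ᶠ a in 𝓝 a₀, a ∈ Set.Ioo (1 - α) 1 :=
    isOpen_Ioo.eventually_mem (⟨ha₀l, ha₀r⟩ : a₀ ∈ Set.Ioo (1-α) 1)
  filter_upwards [ev1, ev2, ev3, ev4] with a h1 h2 h3 h4
  obtain ⟨⟨hΛa0, hΛaa⟩, hFa⟩ := hΛ a h4
  have ha1 : a < 1 := h4.2
  have ha0 : 0 < a := by have := h4.1; linarith
  have hantia := (F_strictAntiOn ha0 ha1).antitoneOn
  have hmem_m : lm ∈ Set.Icc (0:ℝ) a := ⟨hlm0.le, by linarith⟩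
  have hmem_p : lp ∈ Set.Icc (0:ℝ) a := ⟨by linarith, h3.le⟩
  have hmemΛ : Λ a ∈ Set.Icc (0:ℝ) a := ⟨hΛa0, hΛaa.le⟩
  have hgt : lm < Λ a := by
    by_contra h
    push_neg at h
    have := hantia hmemΛ hmem_m h
    simp only [hFa] at this
    exact absurd (lt_of_lt_of_le h1 this) (lt_irrefl c)
  have hlt : Λ a < lp := by
    by_contra h
    push_neg at h
    have := hantia hmem_p hmemΛ h
    simp only [hFa] at this
    exact absurd (lt_of_le_of_lt this h2) (lt_irrefl c)
  rw [Real.dist_eq, abs_lt]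
  constructor
  · simp only [hlm] at hgt; linarith
  · simp only [hlp] at hlt; linarith
section
open ContinuousLinearMap

/-- The invertible linear map `(x,y) ↦ (d1*x + d2*y, y)` for `d1 ≠ 0`. -/
noncomputable def mkEquiv (d1 d2 : ℝ) (h : d1 ≠ 0) : (ℝ × ℝ) ≃L[ℝ] (ℝ × ℝ) :=
  ContinuousLinearEquiv.equivOfInverse
    ((d1 • fst ℝ ℝ ℝ + d2 • snd ℝ ℝ ℝ).prod (snd ℝ ℝ ℝ))
    ((d1⁻¹ • (fst ℝ ℝ ℝ - d2 • snd ℝ ℝ ℝ)).prod (snd ℝ ℝ ℝ))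
    (fun p => by
      apply Prod.ext <;>
        simp only [prod_apply, add_apply, sub_apply, smul_apply, coe_fst', coe_snd',
          smul_eq_mul]
      field_simp
      ring)
    (fun p => by
      apply Prod.ext <;>
        simp only [prod_apply, add_apply, sub_apply, smul_apply, coe_fst', coe_snd',
          smul_eq_mul]
      field_simp
      ring)

lemma mkEquiv_coe (d1 d2 : ℝ) (h : d1 ≠ 0) :
    (mkEquiv d1 d2 h : (ℝ × ℝ) →L[ℝ] (ℝ × ℝ)) =
      (d1 • fst ℝ ℝ ℝ + d2 • snd ℝ ℝ ℝ).prod (snd ℝ ℝ ℝ) := rfl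

lemma mkEquiv_symm_eval (d1 d2 : ℝ) (h : d1 ≠ 0) :
    (mkEquiv d1 d2 h).symm (0, 1) = (d2 / -d1, 1) := by
  rw [ContinuousLinearEquiv.symm_apply_eq]
  unfold mkEquiv
  rw [ContinuousLinearEquiv.equivOfInverse_apply]
  apply Prod.ext <;>
    simp only [prod_apply, add_apply, smul_apply, coe_fst', coe_snd', smul_eq_mul]
  rw [div_neg, mul_neg, mul_div_cancel₀ _ h]
  ring

end

lemma lambda_key (α : ℝ) (hα : α ∈ Set.Ioo (0 : ℝ) 1) (Λ : ℝ → ℝ)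
    (hΛ : ∀ a ∈ Set.Ioo (1 - α) 1, Λ a ∈ Set.Ico 0 a ∧ F (Λ a) a = -Real.log α)
    {a₀ : ℝ} (ha₀ : a₀ ∈ Set.Ioo (1 - α) 1) :
    DifferentiableAt ℝ Λ a₀ ∧ 0 < deriv Λ a₀ := by
  obtain ⟨hαl, hαr⟩ := hα
  obtain ⟨ha₀l, ha₀r⟩ := ha₀
  have ha₀0 : 0 < a₀ := by linarith
  obtain ⟨⟨hl₀0, hl₀a⟩, hFc⟩ := hΛ a₀ ⟨ha₀l, ha₀r⟩
  set l₀ := Λ a₀ with hl₀def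
  set c : ℝ := -Real.log α with hcdef
  -- positivity of Λ a₀
  have hl₀pos : 0 < l₀ := by
    rcases lt_or_eq_of_le hl₀0 with h | h
    · exact h
    · exfalso
      have hF0 : F 0 a₀ = -Real.log (1 - a₀) := by simp [F]
      rw [← h] at hFc
      rw [hF0] at hFc
      have : Real.log (1 - a₀) < Real.log α := Real.log_lt_log (by linarith) (by linarith)
      rw [hcdef] at hFc
      linarith [hFc]
  have hl₀1 : l₀ < 1 := lt_trans hl₀a ha₀r
  -- the two partial derivatives at (l₀, a₀)
  set d1 : ℝ := Real.log l₀ - Real.log (1 - l₀) - Real.log a₀ + Real.log (1 - a₀) with hd1def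
  set d2 : ℝ := (1 - l₀) / (1 - a₀) - l₀ / a₀ with hd2def
  have hd1 : d1 < 0 := by
    have hll : l₀ * (1 - a₀) < a₀ * (1 - l₀) := by nlinarith
    have := Real.log_lt_log (by nlinarith) hll
    rw [Real.log_mul hl₀pos.ne' (by linarith), Real.log_mul ha₀0.ne'
      (by linarith : (1:ℝ) - l₀ ≠ 0)] at this
    rw [hd1def]; linarith
  have hd2 : 0 < d2 := by
    rw [hd2def, sub_pos, div_lt_div_iff₀ ha₀0 (by linarith)]
    nlinarith
  have hd1ne : d1 ≠ 0 := ne_of_lt hd1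
  -- the joint strict derivative of (l,a) ↦ F l a at (l₀, a₀)
  have hfst : HasStrictFDerivAt (fun p : ℝ × ℝ => p.1)
      (ContinuousLinearMap.fst ℝ ℝ ℝ) (l₀, a₀) := hasStrictFDerivAt_fst
  have hsnd : HasStrictFDerivAt (fun p : ℝ × ℝ => p.2)
      (ContinuousLinearMap.snd ℝ ℝ ℝ) (l₀, a₀) := hasStrictFDerivAt_snd
  have h1 : HasStrictFDerivAt (fun p : ℝ × ℝ => p.1 * Real.log p.1)
      ((Real.log l₀ + 1) • ContinuousLinearMap.fst ℝ ℝ ℝ) (l₀, a₀) := by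
    simpa [Function.comp_def] using
      (hasStrictDerivAt_xlogx hl₀pos.ne').comp_hasStrictFDerivAt (l₀, a₀) hfst
  have hin1 : HasStrictFDerivAt (fun p : ℝ × ℝ => 1 - p.1)
      (-(ContinuousLinearMap.fst ℝ ℝ ℝ)) (l₀, a₀) := by
    simpa [Pi.sub_def] using (hasStrictFDerivAt_const (1:ℝ) ((l₀, a₀) : ℝ × ℝ)).sub hfst
  have h2 : HasStrictFDerivAt (fun p : ℝ × ℝ => (1 - p.1) * Real.log (1 - p.1))
      ((Real.log (1 - l₀) + 1) • -(ContinuousLinearMap.fst ℝ ℝ ℝ)) (l₀, a₀) := by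
    simpa [Function.comp_def] using
      (hasStrictDerivAt_xlogx (x := 1 - l₀) (by linarith)).comp_hasStrictFDerivAt (l₀, a₀) hin1
  have hlog2 : HasStrictFDerivAt (fun p : ℝ × ℝ => Real.log p.2)
      (a₀⁻¹ • ContinuousLinearMap.snd ℝ ℝ ℝ) (l₀, a₀) := by
    simpa [Function.comp_def] using
      (Real.hasStrictDerivAt_log ha₀0.ne').comp_hasStrictFDerivAt (l₀, a₀) hsnd
  have h3 : HasStrictFDerivAt (fun p : ℝ × ℝ => p.1 * Real.log p.2)
      (l₀ • (a₀⁻¹ • ContinuousLinearMap.snd ℝ ℝ ℝ) +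
        Real.log a₀ • ContinuousLinearMap.fst ℝ ℝ ℝ) (l₀, a₀) := hfst.mul hlog2
  have hin2 : HasStrictFDerivAt (fun p : ℝ × ℝ => 1 - p.2)
      (-(ContinuousLinearMap.snd ℝ ℝ ℝ)) (l₀, a₀) := by
    simpa [Pi.sub_def] using (hasStrictFDerivAt_const (1:ℝ) ((l₀, a₀) : ℝ × ℝ)).sub hsnd
  have hlog3 : HasStrictFDerivAt (fun p : ℝ × ℝ => Real.log (1 - p.2))
      ((1 - a₀)⁻¹ • -(ContinuousLinearMap.snd ℝ ℝ ℝ)) (l₀, a₀) := by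
    simpa [Function.comp_def] using
      (Real.hasStrictDerivAt_log (by intro hh; rw [sub_eq_zero] at hh; linarith :
        (1:ℝ) - a₀ ≠ 0)).comp_hasStrictFDerivAt (l₀, a₀) hin2
  have h4 : HasStrictFDerivAt (fun p : ℝ × ℝ => (1 - p.1) * Real.log (1 - p.2))
      ((1 - l₀) • ((1 - a₀)⁻¹ • -(ContinuousLinearMap.snd ℝ ℝ ℝ)) +
        Real.log (1 - a₀) • -(ContinuousLinearMap.fst ℝ ℝ ℝ)) (l₀, a₀) := hin1.mul hlog3
  have hFj : HasStrictFDerivAt (fun p : ℝ × ℝ => F p.1 p.2)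
      (d1 • ContinuousLinearMap.fst ℝ ℝ ℝ + d2 • ContinuousLinearMap.snd ℝ ℝ ℝ) (l₀, a₀) := by
    have hcomb := ((h1.add h2).sub h3).sub h4
    have hfun : (fun p : ℝ × ℝ => F p.1 p.2) = fun p : ℝ × ℝ =>
        p.1 * Real.log p.1 + (1 - p.1) * Real.log (1 - p.1) - p.1 * Real.log p.2 -
          (1 - p.1) * Real.log (1 - p.2) := by
      funext p; unfold F; ring
    rw [hfun]
    refine hcomb.congr_fderiv (Eq.symm ?_)
    refine ContinuousLinearMap.ext fun p => ?_
    rw [hd1def, hd2def]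
    simp only [ContinuousLinearMap.add_apply, ContinuousLinearMap.sub_apply,
      ContinuousLinearMap.smul_apply, ContinuousLinearMap.neg_apply,
      ContinuousLinearMap.coe_fst', ContinuousLinearMap.coe_snd', smul_eq_mul]
    field_simp
    ring
  -- the map Φ and its local inverse
  have hΦ : HasStrictFDerivAt (fun p : ℝ × ℝ => (F p.1 p.2, p.2))
      ((mkEquiv d1 d2 hd1ne : (ℝ × ℝ) →L[ℝ] (ℝ × ℝ))) (l₀, a₀) := by
    rw [mkEquiv_coe]
    exact hFj.prodMk hsnd
  set g := HasStrictFDerivAt.localInverse (fun p : ℝ × ℝ => (F p.1 p.2, p.2))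
    (mkEquiv d1 d2 hd1ne) (l₀, a₀) hΦ with hgdef
  have hg : HasStrictFDerivAt g ((mkEquiv d1 d2 hd1ne).symm : (ℝ × ℝ) →L[ℝ] (ℝ × ℝ))
      (c, a₀) := by
    have h := hΦ.to_localInverse
    have hpt : ((F l₀ a₀ : ℝ), a₀) = (c, a₀) := by rw [hFc]
    rw [← hpt]
    exact h
  -- G is differentiable with the right derivative
  set G : ℝ → ℝ := fun a => (g (c, a)).1 with hGdef
  have hpair : HasStrictDerivAt (fun a : ℝ => ((c : ℝ), a)) ((0 : ℝ), (1 : ℝ)) a₀ :=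
    (hasStrictDerivAt_const a₀ c).prodMk (hasStrictDerivAt_id a₀)
  have hcomp : HasStrictDerivAt (fun a : ℝ => g (c, a))
      ((mkEquiv d1 d2 hd1ne).symm (0, 1)) a₀ := by
    simpa [Function.comp_def] using hg.comp_hasStrictDerivAt a₀ hpair
  have hG : HasStrictDerivAt G (d2 / -d1) a₀ := by
    have := hasStrictFDerivAt_fst.comp_hasStrictDerivAt a₀ hcomp
    simp only [Function.comp_def] at this
    rw [mkEquiv_symm_eval] at this
    exact this
  -- Λ agrees with G near a₀
  have hcontΛ := lambda_continuousAt α ⟨hαl, hαr⟩ Λ hΛ ⟨ha₀l, ha₀r⟩ hl₀pos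
  have htend : Filter.Tendsto (fun a => (Λ a, a)) (𝓝 a₀) (𝓝 (l₀, a₀)) :=
    hcontΛ.prodMk_nhds tendsto_id
  have hev1 : ∀ᶠ a in 𝓝 a₀,
      g ((fun p : ℝ × ℝ => (F p.1 p.2, p.2)) (Λ a, a)) = (Λ a, a) :=
    htend.eventually hΦ.eventually_left_inverse
  have hev2 : ∀ᶠ a in 𝓝 a₀, a ∈ Set.Ioo (1 - α) 1 :=
    isOpen_Ioo.eventually_mem (⟨ha₀l, ha₀r⟩ : a₀ ∈ Set.Ioo (1 - α) 1)
  have heq : Λ =ᶠ[𝓝 a₀] G := by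
    filter_upwards [hev1, hev2] with a hg1 hg2
    have hFa := (hΛ a hg2).2
    simp only [hFa] at hg1
    rw [hGdef]
    simp only [hg1]
  have hGdiff : DifferentiableAt ℝ G a₀ := hG.hasDerivAt.differentiableAt
  refine ⟨(heq.differentiableAt_iff).2 hGdiff, ?_⟩
  rw [heq.deriv_eq, hG.hasDerivAt.deriv]
  exact div_pos hd2 (by linarith)

/-- The implicit function `Λ` (where `Λ(a)` is the unique `λ ∈ [0,a)` with
`F(λ,a) = -log α`) is differentiable on `(1-α,1)` with `Λ'(a) > 0` for all
`a ∈ (1-α,1)`; in particular `Λ` is strictly increasing on `(1-α,1)`. -/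
theorem lambda_differentiable_deriv_pos (α : ℝ) (hα : α ∈ Set.Ioo (0 : ℝ) 1)
    (Λ : ℝ → ℝ)
    (hΛ : ∀ a ∈ Set.Ioo (1 - α) 1, Λ a ∈ Set.Ico 0 a ∧ F (Λ a) a = -Real.log α) :
    (∀ a ∈ Set.Ioo (1 - α) 1, DifferentiableAt ℝ Λ a ∧ 0 < deriv Λ a) ∧
    StrictMonoOn Λ (Set.Ioo (1 - α) 1) := by
  constructor
  · intro a ha
    exact lambda_key α hα Λ hΛ ha
  · apply strictMonoOn_of_deriv_pos (convex_Ioo _ _)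
    · intro a ha
      exact (lambda_key α hα Λ hΛ ha).1.continuousAt.continuousWithinAt
    · intro a ha
      rw [interior_Ioo] at ha
      exact (lambda_key α hα Λ hΛ ha).2
end

section
/- For every α ∈ (0,1), the map e_α : L^∞ → ℝ defined by e_α(ξ) = sup_{z>0} ( -(1/z) log E[ exp(-zξ)/α ] ) is a coherent utility function: it is monotone (ξ ≤ η a.s. implies e_α(ξ) ≤ e_α(η)), translation equivariant (e_α(ξ + c) = e_α(ξ) + c for every constant c), positively homogeneous (e_α(tξ) = t e_α(ξ) for t ≥ 0), and superadditive (e_α(ξ + η) ≥ e_α(ξ) + e_α(η)). -/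
open MeasureTheory

/-- A bounded random variable (an element of `L^∞`). -/
def BddRV {Ω : Type*} [MeasurableSpace Ω] (P : Measure Ω) (ξ : Ω → ℝ) : Prop :=
  Measurable ξ ∧ ∃ C : ℝ, ∀ᵐ ω ∂P, |ξ ω| ≤ C

section EvarAux

variable {Ω : Type*} [MeasurableSpace Ω] {P : Measure Ω} [IsProbabilityMeasure P]
  {α : ℝ} {ξ η : Ω → ℝ}

private lemma exp_integrable (hm : Measurable ξ) {C : ℝ} (hC : ∀ᵐ ω ∂P, |ξ ω| ≤ C) (z : ℝ) :
    Integrable (fun ω => Real.exp (-z * ξ ω)) P := by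
  refine Integrable.mono' (integrable_const (Real.exp (|z| * C)))
    (Real.measurable_exp.comp (hm.const_mul (-z))).aestronglyMeasurable ?_
  filter_upwards [hC] with ω h
  rw [Real.norm_eq_abs, abs_of_pos (Real.exp_pos _)]
  apply Real.exp_le_exp.2
  calc -z * ξ ω ≤ |(-z) * ξ ω| := le_abs_self _
    _ = |z| * |ξ ω| := by rw [abs_mul, abs_neg]
    _ ≤ |z| * C := mul_le_mul_of_nonneg_left h (abs_nonneg z)

private lemma exp_memLp (hm : Measurable ξ) {C : ℝ} (hC : ∀ᵐ ω ∂P, |ξ ω| ≤ C) (z : ℝ)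
    (p : ENNReal) : MemLp (fun ω => Real.exp (-z * ξ ω)) p P := by
  refine MemLp.of_bound (Real.measurable_exp.comp (hm.const_mul (-z))).aestronglyMeasurable
    (Real.exp (|z| * C)) ?_
  filter_upwards [hC] with ω h
  rw [Real.norm_eq_abs, abs_of_pos (Real.exp_pos _)]
  apply Real.exp_le_exp.2
  calc -z * ξ ω ≤ |(-z) * ξ ω| := le_abs_self _
    _ = |z| * |ξ ω| := by rw [abs_mul, abs_neg]
    _ ≤ |z| * C := mul_le_mul_of_nonneg_left h (abs_nonneg z)

private lemma exp_integral_pos (hm : Measurable ξ) {C : ℝ} (hC : ∀ᵐ ω ∂P, |ξ ω| ≤ C) (z : ℝ) :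
    0 < ∫ ω, Real.exp (-z * ξ ω) ∂P := by
  have h1 : Real.exp (-(|z| * C)) ≤ ∫ ω, Real.exp (-z * ξ ω) ∂P := by
    calc Real.exp (-(|z| * C)) = ∫ _ω, Real.exp (-(|z| * C)) ∂P := by simp
      _ ≤ _ := by
          refine integral_mono_ae (integrable_const _) (exp_integrable hm hC z) ?_
          filter_upwards [hC] with ω h
          apply Real.exp_le_exp.2
          have h2 : |(-z) * ξ ω| ≤ |z| * C := by
            rw [abs_mul, abs_neg]
            exact mul_le_mul_of_nonneg_left h (abs_nonneg z)
          have h3 := neg_abs_le ((-z) * ξ ω)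
          linarith
  exact lt_of_lt_of_le (Real.exp_pos _) h1

private lemma f_le (hα : α ∈ Set.Ioo (0:ℝ) 1) (hm : Measurable ξ) {C : ℝ}
    (hC : ∀ᵐ ω ∂P, |ξ ω| ≤ C) {z : ℝ} (hz : 0 < z) :
    -(1 / z) * Real.log ((∫ ω, Real.exp (-z * ξ ω) ∂P) / α) ≤ C := by
  have hE : Real.exp (-z * C) ≤ ∫ ω, Real.exp (-z * ξ ω) ∂P := by
    calc Real.exp (-z * C) = ∫ _ω, Real.exp (-z * C) ∂P := by simp
      _ ≤ _ := by
          refine integral_mono_ae (integrable_const _) (exp_integrable hm hC z) ?_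
          filter_upwards [hC] with ω h
          refine Real.exp_le_exp.2 ?_
          have : ξ ω ≤ C := (le_abs_self _).trans h
          nlinarith
  have h2 : Real.exp (-z * C) ≤ (∫ ω, Real.exp (-z * ξ ω) ∂P) / α := by
    rw [le_div_iff₀ hα.1]
    nlinarith [Real.exp_pos (-z * C), hα.2.le]
  have hlog : -z * C ≤ Real.log ((∫ ω, Real.exp (-z * ξ ω) ∂P) / α) := by
    calc -z * C = Real.log (Real.exp (-z * C)) := (Real.log_exp _).symm
      _ ≤ _ := Real.log_le_log (Real.exp_pos _) h2
  have h3 : -(1 / z) * Real.log ((∫ ω, Real.exp (-z * ξ ω) ∂P) / α)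
      ≤ -(1 / z) * (-z * C) := by
    apply mul_le_mul_of_nonpos_left hlog
    simp [le_of_lt hz, one_div_nonneg.2 hz.le]
  have h4 : -(1 / z) * (-z * C) = C := by field_simp
  linarith

private lemma bddAbove_eset (hα : α ∈ Set.Ioo (0:ℝ) 1) (hm : Measurable ξ) {C : ℝ}
    (hC : ∀ᵐ ω ∂P, |ξ ω| ≤ C) :
    BddAbove {y : ℝ | ∃ z : ℝ, 0 < z ∧
      y = -(1 / z) * Real.log ((∫ ω, Real.exp (-z * ξ ω) ∂P) / α)} := by
  refine ⟨C, fun y hy => ?_⟩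
  obtain ⟨z, hz, rfl⟩ := hy
  exact f_le hα hm hC hz

private lemma nonempty_eset :
    Set.Nonempty {y : ℝ | ∃ z : ℝ, 0 < z ∧
      y = -(1 / z) * Real.log ((∫ ω, Real.exp (-z * ξ ω) ∂P) / α)} :=
  ⟨_, 1, one_pos, rfl⟩

private lemma f_add_const (hα : α ∈ Set.Ioo (0:ℝ) 1) (hm : Measurable ξ) {C : ℝ}
    (hC : ∀ᵐ ω ∂P, |ξ ω| ≤ C) (c : ℝ) {z : ℝ} (hz : 0 < z) :
    -(1 / z) * Real.log ((∫ ω, Real.exp (-z * (ξ ω + c)) ∂P) / α)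
      = -(1 / z) * Real.log ((∫ ω, Real.exp (-z * ξ ω) ∂P) / α) + c := by
  have h1 : (fun ω => Real.exp (-z * (ξ ω + c)))
      = fun ω => Real.exp (-z * c) * Real.exp (-z * ξ ω) := by
    funext ω
    rw [← Real.exp_add]
    ring_nf
  rw [h1, integral_const_mul, mul_div_assoc,
    Real.log_mul (Real.exp_ne_zero _) (ne_of_gt (div_pos (exp_integral_pos hm hC z) hα.1)),
    Real.log_exp]
  field_simp
  ring

private lemma f_smul (hα : α ∈ Set.Ioo (0:ℝ) 1) {t : ℝ} (ht : 0 < t) {z : ℝ} (hz : 0 < z) :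
    -(1 / z) * Real.log ((∫ ω, Real.exp (-z * (t * ξ ω)) ∂P) / α)
      = t * (-(1 / (z * t)) * Real.log ((∫ ω, Real.exp (-(z * t) * ξ ω) ∂P) / α)) := by
  have h1 : (fun ω => Real.exp (-z * (t * ξ ω))) = fun ω => Real.exp (-(z * t) * ξ ω) := by
    funext ω; ring_nf
  rw [h1, ← mul_assoc, show t * -(1 / (z * t)) = -(1 / z) by
    field_simp]

private lemma f_superadd (hα : α ∈ Set.Ioo (0:ℝ) 1) (hmξ : Measurable ξ) {Cξ : ℝ}
    (hCξ : ∀ᵐ ω ∂P, |ξ ω| ≤ Cξ) (hmη : Measurable η) {Cη : ℝ}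
    (hCη : ∀ᵐ ω ∂P, |η ω| ≤ Cη) {z₁ z₂ : ℝ} (h₁ : 0 < z₁) (h₂ : 0 < z₂) :
    -(1 / z₁) * Real.log ((∫ ω, Real.exp (-z₁ * ξ ω) ∂P) / α)
      + -(1 / z₂) * Real.log ((∫ ω, Real.exp (-z₂ * η ω) ∂P) / α)
    ≤ -(1 / (z₁ * z₂ / (z₁ + z₂))) *
        Real.log ((∫ ω, Real.exp (-(z₁ * z₂ / (z₁ + z₂)) * (ξ ω + η ω)) ∂P) / α) := by
  set z : ℝ := z₁ * z₂ / (z₁ + z₂) with hzdef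
  have hs : 0 < z₁ + z₂ := by linarith
  have hz : 0 < z := div_pos (mul_pos h₁ h₂) hs
  set p : ℝ := (z₁ + z₂) / z₂ with hpdef
  set q : ℝ := (z₁ + z₂) / z₁ with hqdef
  have hp : 0 < p := div_pos hs h₂
  have hq : 0 < q := div_pos hs h₁
  have hzp : z * p = z₁ := by
    simp only [hzdef, hpdef]; field_simp
  have hzq : z * q = z₂ := by
    simp only [hzdef, hqdef]; field_simp
  have hpq : p.HolderConjugate q := by
    refine Real.holderConjugate_iff.mpr ⟨?_, ?_⟩
    · rw [hpdef, lt_div_iff₀ h₂]; linarith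
    · rw [hpdef, hqdef]; field_simp; ring
  -- Hölder's inequality
  have hHolder := integral_mul_le_Lp_mul_Lq_of_nonneg (μ := P) hpq
    (f := fun ω => Real.exp (-z * ξ ω)) (g := fun ω => Real.exp (-z * η ω))
    (Filter.Eventually.of_forall fun ω => (Real.exp_pos _).le)
    (Filter.Eventually.of_forall fun ω => (Real.exp_pos _).le)
    (exp_memLp hmξ hCξ z _) (exp_memLp hmη hCη z _)
  have hfg : (fun ω => Real.exp (-z * ξ ω) * Real.exp (-z * η ω))
      = fun ω => Real.exp (-z * (ξ ω + η ω)) := by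
    funext ω; rw [← Real.exp_add]; ring_nf
  have hfp : (fun ω => Real.exp (-z * ξ ω) ^ p) = fun ω => Real.exp (-z₁ * ξ ω) := by
    funext ω; rw [← Real.exp_mul]; congr 1; rw [← hzp]; ring
  have hgq : (fun ω => Real.exp (-z * η ω) ^ q) = fun ω => Real.exp (-z₂ * η ω) := by
    funext ω; rw [← Real.exp_mul]; congr 1; rw [← hzq]; ring
  rw [show (∫ ω, Real.exp (-z * ξ ω) * Real.exp (-z * η ω) ∂P)
      = ∫ ω, Real.exp (-z * (ξ ω + η ω)) ∂P by rw [hfg],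
    show (∫ ω, Real.exp (-z * ξ ω) ^ p ∂P) = ∫ ω, Real.exp (-z₁ * ξ ω) ∂P by rw [hfp],
    show (∫ ω, Real.exp (-z * η ω) ^ q ∂P) = ∫ ω, Real.exp (-z₂ * η ω) ∂P by rw [hgq]]
      at hHolder
  set A : ℝ := ∫ ω, Real.exp (-z₁ * ξ ω) ∂P with hAdef
  set B : ℝ := ∫ ω, Real.exp (-z₂ * η ω) ∂P with hBdef
  set E : ℝ := ∫ ω, Real.exp (-z * (ξ ω + η ω)) ∂P with hEdef
  have hA : 0 < A := exp_integral_pos hmξ hCξ z₁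
  have hB : 0 < B := exp_integral_pos hmη hCη z₂
  have hCsum : ∀ᵐ ω ∂P, |ξ ω + η ω| ≤ Cξ + Cη := by
    filter_upwards [hCξ, hCη] with ω hx hy
    calc |ξ ω + η ω| ≤ |ξ ω| + |η ω| := abs_add_le _ _
      _ ≤ Cξ + Cη := add_le_add hx hy
  have hE : 0 < E := exp_integral_pos (hmξ.add hmη) hCsum z
  have hM : 0 < A ^ (1 / p) * B ^ (1 / q) := by positivity
  have hlog1 : Real.log (E / α) ≤ Real.log ((A ^ (1 / p) * B ^ (1 / q)) / α) := by
    apply Real.log_le_log (div_pos hE hα.1)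
    gcongr
    exact hα.1.le
  have hlog2 : Real.log ((A ^ (1 / p) * B ^ (1 / q)) / α)
      = (1 / p) * Real.log (A / α) + (1 / q) * Real.log (B / α) := by
    have hsum : 1 / p + 1 / q = 1 := by
      rw [one_div, one_div]; exact hpq.inv_add_inv_eq_one
    rw [Real.log_div (ne_of_gt hM) (ne_of_gt hα.1),
      Real.log_mul (by positivity) (by positivity),
      Real.log_rpow hA, Real.log_rpow hB,
      Real.log_div (ne_of_gt hA) (ne_of_gt hα.1),
      Real.log_div (ne_of_gt hB) (ne_of_gt hα.1)]
    have : (1 / p) * Real.log α + (1 / q) * Real.log α = Real.log α := by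
      rw [← add_mul, hsum, one_mul]
    linarith [this]
  have hmain : -(1 / z) * Real.log ((A ^ (1 / p) * B ^ (1 / q)) / α)
      ≤ -(1 / z) * Real.log (E / α) := by
    apply mul_le_mul_of_nonpos_left hlog1
    rw [neg_nonpos]
    positivity
  have heq : -(1 / z₁) * Real.log (A / α) + -(1 / z₂) * Real.log (B / α)
      = -(1 / z) * ((1 / p) * Real.log (A / α) + (1 / q) * Real.log (B / α)) := by
    rw [← hzp, ← hzq]
    field_simp
    ring
  rw [heq, ← hlog2]
  exact hmain

private lemma evar_zero (hα : α ∈ Set.Ioo (0:ℝ) 1) : evar P α (fun _ => (0:ℝ)) = 0 := by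
  have hlogα : Real.log α < 0 := Real.log_neg hα.1 hα.2
  have hval : ∀ z : ℝ,
      -(1 / z) * Real.log ((∫ ω, Real.exp (-z * (fun _ => (0:ℝ)) ω) ∂P) / α)
        = (1 / z) * Real.log α := by
    intro z
    have h1 : (∫ ω, Real.exp (-z * (fun _ => (0:ℝ)) ω) ∂P) = 1 := by simp
    rw [h1, Real.log_div one_ne_zero (ne_of_gt hα.1), Real.log_one]
    ring
  have hbdd : BddAbove {y : ℝ | ∃ z : ℝ, 0 < z ∧
      y = -(1 / z) * Real.log ((∫ ω, Real.exp (-z * (fun _ => (0:ℝ)) ω) ∂P) / α)} := by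
    refine ⟨0, ?_⟩
    rintro y ⟨z, hz, rfl⟩
    rw [hval z]
    have h2 : 0 < 1 / z := by positivity
    nlinarith
  unfold evar
  apply le_antisymm
  · refine csSup_le ⟨_, 1, one_pos, rfl⟩ ?_
    rintro y ⟨z, hz, rfl⟩
    rw [hval z]
    have h2 : 0 < 1 / z := by positivity
    nlinarith
  · refine le_of_forall_pos_le_add ?_
    intro ε hε
    set z : ℝ := 1 + (-Real.log α) / ε with hzd
    have hz : 0 < z := by
      have : 0 < (-Real.log α) / ε := div_pos (by linarith) hε
      rw [hzd]; linarith
    have hmem := le_csSup hbdd ⟨z, hz, rfl⟩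
    rw [hval z] at hmem
    have h2 : -ε * z ≤ Real.log α := by
      have h3 : ε * z = ε + (-Real.log α) := by
        rw [hzd]; field_simp
      nlinarith
    have h4 : -ε ≤ (1 / z) * Real.log α := by
      calc -ε = (1 / z) * (-ε * z) := by field_simp
        _ ≤ (1 / z) * Real.log α := mul_le_mul_of_nonneg_left h2 (by positivity)
    linarith

end EvarAux

/-- `e_α : L^∞ → ℝ` is a coherent utility function: monotone, translation equivariant,
positively homogeneous and superadditive. -/
theorem evar_coherent
    {Ω : Type*} [MeasurableSpace Ω] (P : Measure Ω) [IsProbabilityMeasure P]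
    (α : ℝ) (hα : α ∈ Set.Ioo (0 : ℝ) 1) :
    (∀ ξ η : Ω → ℝ, BddRV P ξ → BddRV P η → (∀ᵐ ω ∂P, ξ ω ≤ η ω) →
      evar P α ξ ≤ evar P α η) ∧
    (∀ ξ : Ω → ℝ, BddRV P ξ → ∀ c : ℝ,
      evar P α (fun ω => ξ ω + c) = evar P α ξ + c) ∧
    (∀ ξ : Ω → ℝ, BddRV P ξ → ∀ t : ℝ, 0 ≤ t →
      evar P α (fun ω => t * ξ ω) = t * evar P α ξ) ∧
    (∀ ξ η : Ω → ℝ, BddRV P ξ → BddRV P η →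
      evar P α ξ + evar P α η ≤ evar P α (fun ω => ξ ω + η ω)) := by
  refine ⟨?_, ?_, ?_, ?_⟩
  · -- monotonicity
    rintro ξ η ⟨hmξ, Cξ, hCξ⟩ ⟨hmη, Cη, hCη⟩ hle
    refine csSup_le nonempty_eset ?_
    rintro y ⟨z, hz, rfl⟩
    have hEle : (∫ ω, Real.exp (-z * η ω) ∂P) ≤ ∫ ω, Real.exp (-z * ξ ω) ∂P := by
      refine integral_mono_ae (exp_integrable hmη hCη z) (exp_integrable hmξ hCξ z) ?_
      filter_upwards [hle] with ω h
      exact Real.exp_le_exp.2 (by nlinarith)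
    have hstep : -(1 / z) * Real.log ((∫ ω, Real.exp (-z * ξ ω) ∂P) / α)
        ≤ -(1 / z) * Real.log ((∫ ω, Real.exp (-z * η ω) ∂P) / α) := by
      refine mul_le_mul_of_nonpos_left ?_ ?_
      · refine Real.log_le_log (div_pos (exp_integral_pos hmη hCη z) hα.1) ?_
        gcongr
        exact hα.1.le
      · rw [neg_nonpos]; positivity
    exact hstep.trans (le_csSup (bddAbove_eset hα hmη hCη) ⟨z, hz, rfl⟩)
  · -- translation equivariance
    rintro ξ ⟨hmξ, Cξ, hCξ⟩ c
    have hm' : Measurable fun ω => ξ ω + c := hmξ.add_const c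
    have hC' : ∀ᵐ ω ∂P, |ξ ω + c| ≤ Cξ + |c| := by
      filter_upwards [hCξ] with ω h
      calc |ξ ω + c| ≤ |ξ ω| + |c| := abs_add_le _ _
        _ ≤ Cξ + |c| := by linarith
    apply le_antisymm
    · refine csSup_le nonempty_eset ?_
      rintro y ⟨z, hz, rfl⟩
      rw [f_add_const hα hmξ hCξ c hz]
      exact add_le_add_left (le_csSup (bddAbove_eset hα hmξ hCξ) ⟨z, hz, rfl⟩) c
    · have h1 : evar P α ξ ≤ evar P α (fun ω => ξ ω + c) - c := by
        refine csSup_le nonempty_eset ?_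
        rintro y ⟨z, hz, rfl⟩
        rw [le_sub_iff_add_le]
        refine le_csSup (bddAbove_eset hα hm' hC') ⟨z, hz, ?_⟩
        rw [f_add_const hα hmξ hCξ c hz]
      linarith
  · -- positive homogeneity
    rintro ξ ⟨hmξ, Cξ, hCξ⟩ t ht
    rcases eq_or_lt_of_le ht with rfl | htpos
    · rw [show (fun ω => (0:ℝ) * ξ ω) = fun _ => (0:ℝ) from funext fun ω => zero_mul _,
        evar_zero hα, zero_mul]
    · have hm' : Measurable fun ω => t * ξ ω := hmξ.const_mul t
      have hC' : ∀ᵐ ω ∂P, |t * ξ ω| ≤ t * Cξ := by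
        filter_upwards [hCξ] with ω h
        rw [abs_mul, abs_of_pos htpos]
        exact mul_le_mul_of_nonneg_left h htpos.le
      apply le_antisymm
      · refine csSup_le nonempty_eset ?_
        rintro y ⟨z, hz, rfl⟩
        rw [f_smul hα htpos hz]
        exact mul_le_mul_of_nonneg_left
          (le_csSup (bddAbove_eset hα hmξ hCξ) ⟨z * t, mul_pos hz htpos, rfl⟩) ht
      · have h2 : evar P α ξ ≤ evar P α (fun ω => t * ξ ω) / t := by
          refine csSup_le nonempty_eset ?_
          rintro y ⟨z, hz, rfl⟩
          rw [le_div_iff₀ htpos, mul_comm]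
          refine le_csSup (bddAbove_eset hα hm' hC') ⟨z / t, div_pos hz htpos, ?_⟩
          rw [f_smul hα htpos (div_pos hz htpos), div_mul_cancel₀ z (ne_of_gt htpos)]
        calc t * evar P α ξ ≤ t * (evar P α (fun ω => t * ξ ω) / t) :=
              mul_le_mul_of_nonneg_left h2 ht
          _ = evar P α (fun ω => t * ξ ω) := by field_simp
  · -- superadditivity
    rintro ξ η ⟨hmξ, Cξ, hCξ⟩ ⟨hmη, Cη, hCη⟩
    have hm' : Measurable fun ω => ξ ω + η ω := hmξ.add hmη
    have hC' : ∀ᵐ ω ∂P, |ξ ω + η ω| ≤ Cξ + Cη := by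
      filter_upwards [hCξ, hCη] with ω h1 h2
      calc |ξ ω + η ω| ≤ |ξ ω| + |η ω| := abs_add_le _ _
        _ ≤ Cξ + Cη := add_le_add h1 h2
    have key : ∀ z₁ z₂ : ℝ, 0 < z₁ → 0 < z₂ →
        -(1 / z₁) * Real.log ((∫ ω, Real.exp (-z₁ * ξ ω) ∂P) / α)
          + -(1 / z₂) * Real.log ((∫ ω, Real.exp (-z₂ * η ω) ∂P) / α)
        ≤ evar P α (fun ω => ξ ω + η ω) := by
      intro z₁ z₂ h₁ h₂
      refine (f_superadd hα hmξ hCξ hmη hCη h₁ h₂).trans ?_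
      exact le_csSup (bddAbove_eset hα hm' hC')
        ⟨z₁ * z₂ / (z₁ + z₂), div_pos (mul_pos h₁ h₂) (by linarith), rfl⟩
    have h1 : evar P α ξ ≤ evar P α (fun ω => ξ ω + η ω) - evar P α η := by
      refine csSup_le nonempty_eset ?_
      rintro y ⟨z₁, h₁, rfl⟩
      rw [le_sub_iff_add_le, add_comm, ← le_sub_iff_add_le]
      refine csSup_le nonempty_eset ?_
      rintro b ⟨z₂, h₂, rfl⟩
      rw [le_sub_iff_add_le]
      linarith [key z₁ z₂ h₁ h₂]
    linarith
end

section
/- For every bounded random variable ξ: (i) sup_{z>0} ( -(1/z) log E[exp(-zξ)] ) = E[ξ] (i.e. e_α(ξ) with α = 1 equals the expectation), and (ii) e_α(ξ) → ess inf ξ as α → 0⁺. -/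
open MeasureTheory

set_option maxHeartbeats 2000000 in
/-- Limiting cases of the Entropic Value at Risk: for `α = 1` it equals the expectation,
`sup_{z>0} ( -(1/z) log E[exp(-zξ)] ) = E[ξ]`, and as `α → 0⁺`, `e_α(ξ) → ess inf ξ`. -/
theorem evar_limit_cases
    {Ω : Type*} [MeasurableSpace Ω] (P : Measure Ω) [IsProbabilityMeasure P]
    (ξ : Ω → ℝ) (hmeas : Measurable ξ) (hbdd : ∃ C : ℝ, ∀ᵐ ω ∂P, |ξ ω| ≤ C) :
    sSup {y : ℝ | ∃ z : ℝ, 0 < z ∧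
        y = -(1 / z) * Real.log (∫ ω, Real.exp (-z * ξ ω) ∂P)}
      = ∫ ω, ξ ω ∂P ∧
    Filter.Tendsto (fun α : ℝ => evar P α ξ) (nhdsWithin 0 (Set.Ioi 0))
      (nhds (essInf ξ P)) := by
  classical
  obtain ⟨C₀, hC₀⟩ := hbdd
  set C : ℝ := max C₀ 1 with hCdef
  have hC : ∀ᵐ ω ∂P, |ξ ω| ≤ C := hC₀.mono fun ω h => le_trans h (le_max_left _ _)
  have hC1 : (1:ℝ) ≤ C := le_max_right _ _
  have hCpos : (0:ℝ) < C := lt_of_lt_of_le one_pos hC1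
  set I : ℝ := ∫ ω, ξ ω ∂P with hIdef
  set m : ℝ := essInf ξ P with hmdef
  -- integrability facts
  have hIntExp : ∀ z : ℝ, Integrable (fun ω => Real.exp (-z * ξ ω)) P := by
    intro z
    refine Integrable.mono' (integrable_const (Real.exp (|z| * C)))
      ((hmeas.const_mul (-z)).exp).aestronglyMeasurable ?_
    filter_upwards [hC] with ω h
    rw [Real.norm_eq_abs, abs_of_pos (Real.exp_pos _)]
    apply Real.exp_le_exp.2
    calc -z * ξ ω ≤ |(-z) * ξ ω| := le_abs_self _
      _ = |z| * |ξ ω| := by rw [abs_mul, abs_neg]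
      _ ≤ |z| * C := mul_le_mul_of_nonneg_left h (abs_nonneg z)
  have hIntXi : Integrable ξ P := by
    refine Integrable.mono' (integrable_const C) hmeas.aestronglyMeasurable ?_
    filter_upwards [hC] with ω h
    rwa [Real.norm_eq_abs]
  have hIntSq : Integrable (fun ω => ξ ω ^ 2) P := by
    refine Integrable.mono' (integrable_const (C ^ 2))
      ((hmeas.pow_const 2)).aestronglyMeasurable ?_
    filter_upwards [hC] with ω h
    rw [Real.norm_eq_abs, abs_of_nonneg (sq_nonneg _), ← sq_abs]
    exact pow_le_pow_left₀ (abs_nonneg _) h 2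
  -- positivity of the Laplace transform
  have hMpos : ∀ z : ℝ, 0 < ∫ ω, Real.exp (-z * ξ ω) ∂P := by
    intro z
    have hle : Real.exp (-(|z| * C)) ≤ ∫ ω, Real.exp (-z * ξ ω) ∂P := by
      have h1 : Real.exp (-(|z| * C)) = ∫ _ω, Real.exp (-(|z| * C)) ∂P := by simp
      rw [h1]
      refine integral_mono_ae (integrable_const _) (hIntExp z) ?_
      filter_upwards [hC] with ω h
      apply Real.exp_le_exp.2
      calc -(|z| * C) ≤ -(|z| * |ξ ω|) :=
            neg_le_neg (mul_le_mul_of_nonneg_left h (abs_nonneg z))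
        _ = -|z * ξ ω| := by rw [abs_mul]
        _ ≤ -z * ξ ω := by rw [neg_mul]; exact neg_le_neg (le_abs_self _)
    exact lt_of_lt_of_le (Real.exp_pos _) hle
  -- Jensen's inequality : exp(-z I) ≤ M z
  have hJensen : ∀ z : ℝ, Real.exp (-z * I) ≤ ∫ ω, Real.exp (-z * ξ ω) ∂P := by
    intro z
    have hpt : ∀ ω, Real.exp (-z * I) * (1 + (-z * ξ ω + z * I)) ≤ Real.exp (-z * ξ ω) := by
      intro ω
      have h1 := Real.add_one_le_exp (-z * ξ ω + z * I)
      calc Real.exp (-z * I) * (1 + (-z * ξ ω + z * I))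
          ≤ Real.exp (-z * I) * Real.exp (-z * ξ ω + z * I) := by
            apply mul_le_mul_of_nonneg_left _ (Real.exp_pos _).le
            linarith
        _ = Real.exp (-z * ξ ω) := by rw [← Real.exp_add]; ring_nf
    have hint : Integrable (fun ω => Real.exp (-z * I) * (1 + (-z * ξ ω + z * I))) P := by
      apply Integrable.const_mul
      exact (integrable_const 1).add ((hIntXi.const_mul (-z)).add (integrable_const (z * I)))
    have hcalc : ∫ ω, Real.exp (-z * I) * (1 + (-z * ξ ω + z * I)) ∂P = Real.exp (-z * I) := by
      have e1 : ∀ ω, Real.exp (-z * I) * (1 + (-z * ξ ω + z * I))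
          = (Real.exp (-z * I) * (1 + z * I)) + (-z * Real.exp (-z * I)) * ξ ω := by
        intro ω; ring
      simp_rw [e1]
      have e2 : ∫ ω, ((Real.exp (-z * I) * (1 + z * I)) + (-z * Real.exp (-z * I)) * ξ ω) ∂P
          = (∫ _ω, (Real.exp (-z * I) * (1 + z * I)) ∂P)
            + ∫ ω, (-z * Real.exp (-z * I)) * ξ ω ∂P :=
        integral_add (integrable_const _) (hIntXi.const_mul _)
      have e3 : ∫ ω, -z * Real.exp (-z * I) * ξ ω ∂P = -z * Real.exp (-z * I) * I := by
        rw [integral_const_mul, ← hIdef]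
      rw [e2, e3, integral_const]
      simp
      ring
    calc Real.exp (-z * I) = ∫ ω, Real.exp (-z * I) * (1 + (-z * ξ ω + z * I)) ∂P := hcalc.symm
      _ ≤ ∫ ω, Real.exp (-z * ξ ω) ∂P :=
        integral_mono_ae hint (hIntExp z) (Filter.Eventually.of_forall hpt)
  -- each element of the α = 1 set is ≤ I
  have hgle : ∀ z : ℝ, 0 < z →
      -(1 / z) * Real.log (∫ ω, Real.exp (-z * ξ ω) ∂P) ≤ I := by
    intro z hz
    have hlog : -z * I ≤ Real.log (∫ ω, Real.exp (-z * ξ ω) ∂P) := by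
      rw [← Real.log_exp (-z * I)]
      exact Real.log_le_log (Real.exp_pos _) (hJensen z)
    have h1 : (1 / z) * (-z * I) ≤ (1 / z) * Real.log (∫ ω, Real.exp (-z * ξ ω) ∂P) :=
      mul_le_mul_of_nonneg_left hlog (one_div_pos.2 hz).le
    have h2 : (1 / z) * (-z * I) = -I := by field_simp
    linarith
  -- I ≤ C and -C ≤ ξ a.e.
  have hIleC : I ≤ C := by
    rw [hIdef]
    have := integral_mono_ae hIntXi (integrable_const C)
      (hC.mono fun ω h => (abs_le.1 h).2)
    simpa using this
  -- ξ ≥ m a.e.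
  have hbd_le : Filter.IsBoundedUnder (· ≤ ·) (ae P) ξ :=
    ⟨C, Filter.eventually_map.2 (hC.mono fun ω h => (abs_le.1 h).2)⟩
  have hbd_ge : Filter.IsBoundedUnder (· ≥ ·) (ae P) ξ :=
    ⟨-C, Filter.eventually_map.2 (hC.mono fun ω h => (abs_le.1 h).1)⟩
  have hmle : ∀ᵐ ω ∂P, m ≤ ξ ω := ae_essInf_le hbd_ge
  have hmleI : m ≤ I := by
    rw [hIdef]
    have := integral_mono_ae (integrable_const m) hIntXi hmle
    simpa using this
  -- lower bound m for each -(1/z) log M z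
  have hgge : ∀ z : ℝ, 0 < z →
      m ≤ -(1 / z) * Real.log (∫ ω, Real.exp (-z * ξ ω) ∂P) := by
    intro z hz
    have hMle : (∫ ω, Real.exp (-z * ξ ω) ∂P) ≤ Real.exp (-z * m) := by
      have := integral_mono_ae (hIntExp z) (integrable_const (Real.exp (-z * m)))
        (hmle.mono fun ω h => Real.exp_le_exp.2 (by nlinarith))
      simpa using this
    have hlog : Real.log (∫ ω, Real.exp (-z * ξ ω) ∂P) ≤ -z * m := by
      rw [← Real.log_exp (-z * m)]
      exact Real.log_le_log (hMpos z) hMle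
    have h1 : (1 / z) * Real.log (∫ ω, Real.exp (-z * ξ ω) ∂P) ≤ (1 / z) * (-z * m) :=
      mul_le_mul_of_nonneg_left hlog (one_div_pos.2 hz).le
    have h2 : (1 / z) * (-z * m) = -m := by field_simp
    linarith
  have hglC : ∀ z : ℝ, 0 < z →
      -(1 / z) * Real.log (∫ ω, Real.exp (-z * ξ ω) ∂P) ≤ C :=
    fun z hz => le_trans (hgle z hz) hIleC
  -- small-z lower bound (Taylor)
  have hglow : ∀ z : ℝ, 0 < z → z * C ≤ 1 →
      I - z * C ^ 2 ≤ -(1 / z) * Real.log (∫ ω, Real.exp (-z * ξ ω) ∂P) := by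
    intro z hz hzC
    have hM2 : (∫ ω, Real.exp (-z * ξ ω) ∂P) ≤ 1 - z * I + z ^ 2 * C ^ 2 := by
      have hint2 : Integrable (fun ω => 1 - z * ξ ω + z ^ 2 * ξ ω ^ 2) P :=
        ((integrable_const 1).sub (hIntXi.const_mul z)).add (hIntSq.const_mul (z ^ 2))
      have step1 : (∫ ω, Real.exp (-z * ξ ω) ∂P)
          ≤ ∫ ω, (1 - z * ξ ω + z ^ 2 * ξ ω ^ 2) ∂P := by
        refine integral_mono_ae (hIntExp z) hint2 ?_
        filter_upwards [hC] with ω h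
        have habs : |(-z * ξ ω)| ≤ 1 := by
          rw [abs_mul, abs_neg, abs_of_pos hz]
          calc z * |ξ ω| ≤ z * C := mul_le_mul_of_nonneg_left h hz.le
            _ ≤ 1 := hzC
        have hb := Real.exp_bound habs (by norm_num : 0 < 2)
        have hb1 := (abs_sub_le_iff.1 hb).1
        have hsum : (∑ i ∈ Finset.range 2, (-z * ξ ω) ^ i / (Nat.factorial i)) =
            1 + (-z * ξ ω) := by
          simp [Finset.sum_range_succ]
        rw [hsum] at hb1
        have hsq : |(-z * ξ ω)| ^ 2 = z ^ 2 * ξ ω ^ 2 := by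
          rw [sq_abs]; ring
        rw [hsq] at hb1
        norm_num at hb1
        rw [neg_mul]
        nlinarith [hb1, mul_nonneg (sq_nonneg z) (sq_nonneg (ξ ω))]
      have step2 : ∫ ω, (1 - z * ξ ω + z ^ 2 * ξ ω ^ 2) ∂P
          = 1 - z * I + z ^ 2 * ∫ ω, ξ ω ^ 2 ∂P := by
        have e1 : ∫ ω, (1 - z * ξ ω + z ^ 2 * ξ ω ^ 2) ∂P
            = (∫ ω, (1 - z * ξ ω) ∂P) + ∫ ω, z ^ 2 * ξ ω ^ 2 ∂P :=
          integral_add ((integrable_const 1).sub (hIntXi.const_mul z))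
            (hIntSq.const_mul (z ^ 2))
        have e2 : ∫ ω, (1 - z * ξ ω) ∂P = (∫ _ω, (1:ℝ) ∂P) - ∫ ω, z * ξ ω ∂P :=
          integral_sub (integrable_const 1) (hIntXi.const_mul z)
        have e3 : ∫ ω, z * ξ ω ∂P = z * I := by
          rw [integral_const_mul, ← hIdef]
        have e4 : ∫ ω, z ^ 2 * ξ ω ^ 2 ∂P = z ^ 2 * ∫ ω, ξ ω ^ 2 ∂P :=
          integral_const_mul _ _
        rw [e1, e2, e3, e4, integral_const]
        simp
      have step3 : ∫ ω, ξ ω ^ 2 ∂P ≤ C ^ 2 := by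
        have := integral_mono_ae hIntSq (integrable_const (C ^ 2))
          (hC.mono fun ω h => by
            show ξ ω ^ 2 ≤ C ^ 2
            rw [← sq_abs (ξ ω)]; exact pow_le_pow_left₀ (abs_nonneg _) h 2)
        simpa using this
      calc (∫ ω, Real.exp (-z * ξ ω) ∂P) ≤ 1 - z * I + z ^ 2 * ∫ ω, ξ ω ^ 2 ∂P := by
            rw [← step2]; exact step1
        _ ≤ 1 - z * I + z ^ 2 * C ^ 2 := by nlinarith [sq_nonneg z]
    have hlog : Real.log (∫ ω, Real.exp (-z * ξ ω) ∂P) ≤ -z * I + z ^ 2 * C ^ 2 := by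
      have := Real.log_le_sub_one_of_pos (hMpos z)
      linarith
    have h1 : (1 / z) * Real.log (∫ ω, Real.exp (-z * ξ ω) ∂P)
        ≤ (1 / z) * (-z * I + z ^ 2 * C ^ 2) :=
      mul_le_mul_of_nonneg_left hlog (one_div_pos.2 hz).le
    have h2 : (1 / z) * (-z * I + z ^ 2 * C ^ 2) = -I + z * C ^ 2 := by
      field_simp
    linarith
  -- positive mass near the essential infimum
  haveI : (ae P).NeBot := ae_neBot.2 (IsProbabilityMeasure.ne_zero P)
  have hpos_meas : ∀ δ : ℝ, 0 < δ → 0 < (P {ω | ξ ω ≤ m + δ}).toReal := by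
    intro δ hδ
    rcases eq_or_ne (P {ω | ξ ω ≤ m + δ}) 0 with h0 | h0
    · exfalso
      have hae : ∀ᵐ ω ∂P, m + δ ≤ ξ ω := by
        have := measure_eq_zero_iff_ae_notMem.1 h0
        filter_upwards [this] with ω h
        simp only [Set.mem_setOf_eq, not_le] at h
        exact h.le
      have : m + δ ≤ m := by
        rw [hmdef]
        exact Filter.le_liminf_of_le (hbd_le.isCoboundedUnder_ge) hae
      linarith
    · exact ENNReal.toReal_pos h0 (measure_ne_top P _)
  -- lower bound on M z via the set {ξ ≤ m + δ}
  have hlowM : ∀ z : ℝ, 0 < z → ∀ δ : ℝ, 0 < δ →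
      Real.exp (-z * (m + δ)) * (P {ω | ξ ω ≤ m + δ}).toReal
        ≤ ∫ ω, Real.exp (-z * ξ ω) ∂P := by
    intro z hz δ hδ
    have hAmeas : MeasurableSet {ω | ξ ω ≤ m + δ} :=
      measurableSet_le hmeas measurable_const
    have h1 : Real.exp (-z * (m + δ)) * (P {ω | ξ ω ≤ m + δ}).toReal
        ≤ ∫ ω in {ω | ξ ω ≤ m + δ}, Real.exp (-z * ξ ω) ∂P := by
      refine setIntegral_ge_of_const_le_real hAmeas (measure_ne_top P _) ?_
        ((hIntExp z).integrableOn)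
      intro x hx
      exact Real.exp_le_exp.2 (by nlinarith [Set.mem_setOf_eq ▸ hx])
    have h2 : ∫ ω in {ω | ξ ω ≤ m + δ}, Real.exp (-z * ξ ω) ∂P
        ≤ ∫ ω, Real.exp (-z * ξ ω) ∂P :=
      setIntegral_le_integral (hIntExp z)
        (Filter.Eventually.of_forall fun ω => (Real.exp_pos _).le)
    linarith
  constructor
  · -- Part (i)
    have hne : {y : ℝ | ∃ z : ℝ, 0 < z ∧
        y = -(1 / z) * Real.log (∫ ω, Real.exp (-z * ξ ω) ∂P)}.Nonempty :=
      ⟨_, 1, one_pos, rfl⟩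
    have hub : ∀ y ∈ {y : ℝ | ∃ z : ℝ, 0 < z ∧
        y = -(1 / z) * Real.log (∫ ω, Real.exp (-z * ξ ω) ∂P)}, y ≤ I := by
      rintro y ⟨z, hz, rfl⟩
      exact hgle z hz
    refine le_antisymm (csSup_le hne hub) ?_
    apply le_of_forall_sub_le
    intro ε hε
    set z₀ : ℝ := min (ε / C ^ 2) (1 / C) with hz₀def
    have hz₀pos : 0 < z₀ :=
      lt_min (div_pos hε (pow_pos hCpos 2)) (one_div_pos.2 hCpos)
    have hz₀C : z₀ * C ≤ 1 := by
      have : z₀ ≤ 1 / C := min_le_right _ _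
      calc z₀ * C ≤ (1 / C) * C := mul_le_mul_of_nonneg_right this hCpos.le
        _ = 1 := by field_simp
    have hz₀ε : z₀ * C ^ 2 ≤ ε := by
      have h1 : z₀ ≤ ε / C ^ 2 := min_le_left _ _
      calc z₀ * C ^ 2 ≤ (ε / C ^ 2) * C ^ 2 :=
            mul_le_mul_of_nonneg_right h1 (pow_pos hCpos 2).le
        _ = ε := by field_simp
    have hmem : -(1 / z₀) * Real.log (∫ ω, Real.exp (-z₀ * ξ ω) ∂P) ∈
        {y : ℝ | ∃ z : ℝ, 0 < z ∧
          y = -(1 / z) * Real.log (∫ ω, Real.exp (-z * ξ ω) ∂P)} :=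
      ⟨z₀, hz₀pos, rfl⟩
    have hle := le_csSup ⟨I, hub⟩ hmem
    have := hglow z₀ hz₀pos hz₀C
    linarith
  · -- Part (ii)
    rw [Metric.tendsto_nhds]
    intro ε hε
    have hε' : 0 < ε / 2 := by linarith
    set p : ℝ := (P {ω | ξ ω ≤ m + (ε / 2) / 2}).toReal with hpdef
    have hp : 0 < p := hpos_meas _ (by linarith)
    set Z : ℝ := max 1 (2 * |Real.log p| / (ε / 2)) with hZdef
    have hZ1 : (1:ℝ) ≤ Z := le_max_left _ _
    have hZpos : (0:ℝ) < Z := lt_of_lt_of_le one_pos hZ1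
    have hZbig : 2 * |Real.log p| ≤ Z * (ε / 2) := by
      have h1 : 2 * |Real.log p| / (ε / 2) ≤ Z := le_max_right _ _
      rw [div_le_iff₀ hε'] at h1
      linarith
    set δ₀ : ℝ := min (Real.exp ((m + ε / 2 - C) * Z)) 1 with hδ₀def
    have hδ₀ : 0 < δ₀ := lt_min (Real.exp_pos _) one_pos
    filter_upwards [Ioo_mem_nhdsGT_of_mem (Set.left_mem_Ico.2 hδ₀)] with α hα
    obtain ⟨hα0, hα1'⟩ := hα
    have hα1 : α < 1 := lt_of_lt_of_le hα1' (min_le_right _ _)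
    have hαe : α < Real.exp ((m + ε / 2 - C) * Z) :=
      lt_of_lt_of_le hα1' (min_le_left _ _)
    have hlogα : Real.log α < 0 := Real.log_neg hα0 hα1
    -- rewrite of elements
    have hyval : ∀ z : ℝ, 0 < z →
        -(1 / z) * Real.log ((∫ ω, Real.exp (-z * ξ ω) ∂P) / α)
          = -(1 / z) * Real.log (∫ ω, Real.exp (-z * ξ ω) ∂P) + Real.log α / z := by
      intro z hz
      rw [Real.log_div (ne_of_gt (hMpos z)) (ne_of_gt hα0)]
      ring
    have hSub : ∀ y ∈ {y : ℝ | ∃ z : ℝ, 0 < z ∧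
        y = -(1 / z) * Real.log ((∫ ω, Real.exp (-z * ξ ω) ∂P) / α)}, y ≤ C := by
      rintro y ⟨z, hz, rfl⟩
      rw [hyval z hz]
      have h1 := hglC z hz
      have h2 : Real.log α / z ≤ 0 :=
        div_nonpos_iff.2 (Or.inr ⟨hlogα.le, hz.le⟩)
      linarith
    have hSne : {y : ℝ | ∃ z : ℝ, 0 < z ∧
        y = -(1 / z) * Real.log ((∫ ω, Real.exp (-z * ξ ω) ∂P) / α)}.Nonempty :=
      ⟨_, 1, one_pos, rfl⟩
    -- upper bound
    have hub : ∀ y ∈ {y : ℝ | ∃ z : ℝ, 0 < z ∧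
        y = -(1 / z) * Real.log ((∫ ω, Real.exp (-z * ξ ω) ∂P) / α)},
        y ≤ m + ε / 2 := by
      rintro y ⟨z, hz, rfl⟩
      rw [hyval z hz]
      rcases le_or_gt Z z with hzZ | hzZ
      · -- large z
        have hMlb := hlowM z hz ((ε / 2) / 2) (by linarith)
        have hlog : -z * (m + (ε / 2) / 2) + Real.log p
            ≤ Real.log (∫ ω, Real.exp (-z * ξ ω) ∂P) := by
          have := Real.log_le_log (mul_pos (Real.exp_pos _) hp) hMlb
          rwa [Real.log_mul (ne_of_gt (Real.exp_pos _)) (ne_of_gt hp),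
            Real.log_exp] at this
        have h1 : (1 / z) * (-z * (m + (ε / 2) / 2) + Real.log p)
            ≤ (1 / z) * Real.log (∫ ω, Real.exp (-z * ξ ω) ∂P) :=
          mul_le_mul_of_nonneg_left hlog (one_div_pos.2 hz).le
        have h2 : (1 / z) * (-z * (m + (ε / 2) / 2) + Real.log p)
            = -(m + (ε / 2) / 2) + Real.log p / z := by
          field_simp
        have h34 : -(Real.log p / z) ≤ (ε / 2) / 2 := by
          have e : -(Real.log p / z) = -Real.log p / z := by ring
          rw [e, div_le_iff₀ hz]
          linarith [neg_le_abs (Real.log p),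
            mul_le_mul_of_nonneg_right hzZ hε'.le, hZbig]
        have h5 : Real.log α / z ≤ 0 := div_nonpos_iff.2 (Or.inr ⟨hlogα.le, hz.le⟩)
        rw [h2] at h1
        linarith
      · -- small z
        have h1 := hglC z hz
        have h2 : Real.log α / z ≤ Real.log α / Z := by
          rw [div_le_div_iff₀ hz hZpos]
          have := mul_le_mul_of_nonpos_left hzZ.le hlogα.le
          linarith
        have h3 : Real.log α < (m + ε / 2 - C) * Z :=
          (Real.log_lt_iff_lt_exp hα0).2 hαe
        have h4 : Real.log α / Z ≤ m + ε / 2 - C := by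
          rw [div_le_iff₀ hZpos]
          nlinarith
        linarith
    -- definitional unfolding of evar
    have hev : evar P α ξ = sSup {y : ℝ | ∃ z : ℝ, 0 < z ∧
        y = -(1 / z) * Real.log ((∫ ω, Real.exp (-z * ξ ω) ∂P) / α)} := rfl
    have hup : evar P α ξ ≤ m + ε / 2 := by
      rw [hev]; exact csSup_le hSne hub
    -- lower bound
    have hlow : m - ε / 2 ≤ evar P α ξ := by
      set z₁ : ℝ := -Real.log α / (ε / 2) with hz₁def
      have hz₁pos : 0 < z₁ := div_pos (by linarith) hε'
      have hlogne : Real.log α ≠ 0 := ne_of_lt hlogα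
      have hfrac : Real.log α / z₁ = -(ε / 2) := by
        rw [hz₁def]
        field_simp
      have hmem : -(1 / z₁) * Real.log ((∫ ω, Real.exp (-z₁ * ξ ω) ∂P) / α) ∈
          {y : ℝ | ∃ z : ℝ, 0 < z ∧
            y = -(1 / z) * Real.log ((∫ ω, Real.exp (-z * ξ ω) ∂P) / α)} :=
        ⟨z₁, hz₁pos, rfl⟩
      have hle := le_csSup ⟨C, hSub⟩ hmem
      rw [hev]
      have hval := hyval z₁ hz₁pos
      have hg := hgge z₁ hz₁pos
      rw [hval, hfrac] at hle
      linarith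
    rw [Real.dist_eq, abs_sub_lt_iff]
    constructor <;> linarith
end
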